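/- arXiv:1611.06739 — 4 statements merged into one kernel-verified Lean document; each statement's English description precedes it below -/
import Mathlib

section
/- For any q ∈ [0,1]: α·q_α(B_q) ≤ π̂_α·q, with equality if and only if h·q = 0. -/
open Finset

attribute [local instance] Classical.propDecidable

/-- The `i`-th smallest (1-indexed) element of the multiset of p-values `{p_j : j ∈ I}`. -/
noncomputable def pOrd {m : ℕ} (p : Fin m → ℝ) (I : Finset (Fin m)) (i : ℕ) : ℝ :=
  ((I.val.map p).sort (· ≤ ·)).getD (i - 1) 0

/-- The Simes local test rejects `H_I` (written `I ∈ 𝒰`) iff `I` is nonempty and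
`|I|·p_{(i:I)} ≤ i·α` for at least one `1 ≤ i ≤ |I|`. -/
def SimesU {m : ℕ} (α : ℝ) (p : Fin m → ℝ) (I : Finset (Fin m)) : Prop :=
  ∃ i, 1 ≤ i ∧ i ≤ I.card ∧ (I.card : ℝ) * pOrd p I i ≤ (i : ℝ) * α

/-- Closed testing rejects `H_I` (written `I ∈ 𝒳`) iff `J ∈ 𝒰` for every `J ⊇ I`. -/
def ClosedX {m : ℕ} (α : ℝ) (p : Fin m → ℝ) (I : Finset (Fin m)) : Prop :=
  ∀ J, I ⊆ J → SimesU α p J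

/-- `K_i = {r_{m−i+1},…,r_m}`: the `i` indices with largest p-values. -/
def Kset {m : ℕ} (r : Fin m → Fin m) (i : ℕ) : Finset (Fin m) :=
  (Finset.univ.filter fun j : Fin m => m - i ≤ (j : ℕ)).image r

/-- `L_i = {r_1,…,r_i}`: the `i` indices with smallest p-values. -/
def Lset {m : ℕ} (r : Fin m → Fin m) (i : ℕ) : Finset (Fin m) :=
  (Finset.univ.filter fun j : Fin m => (j : ℕ) < i).image r

/-- `h = max{0 ≤ i ≤ m : K_i ∉ 𝒰}`. -/
noncomputable def hval {m : ℕ} (α : ℝ) (p : Fin m → ℝ) (r : Fin m → Fin m) : ℕ :=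
  sSup {i | i ≤ m ∧ ¬ SimesU α p (Kset r i)}

/-- `t(S) = max{|I| : I ⊆ S, I ∉ 𝒳}`. -/
noncomputable def tval {m : ℕ} (α : ℝ) (p : Fin m → ℝ) (S : Finset (Fin m)) : ℕ :=
  sSup {k | ∃ I, I ⊆ S ∧ ¬ ClosedX α p I ∧ I.card = k}

/-- `d(S) = |S| − t(S)`. -/
noncomputable def dval {m : ℕ} (α : ℝ) (p : Fin m → ℝ) (S : Finset (Fin m)) : ℕ :=
  S.card - tval α p S

/-- `q_α(S) = t(S)/|S|` for nonempty `S`, and `0` for `S = ∅`. -/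
noncomputable def qval {m : ℕ} (α : ℝ) (p : Fin m → ℝ) (S : Finset (Fin m)) : ℝ :=
  if S = ∅ then 0 else (tval α p S : ℝ) / S.card

/-- `z = 0` if `h = m`, else `z = min{m−h ≤ i ≤ m : h·p_{(i)} ≤ (i−m+h+1)·α}`. -/
noncomputable def zval {m : ℕ} (α : ℝ) (p : Fin m → ℝ) (r : Fin m → Fin m) : ℕ :=
  if hval α p r = m then 0 else
    sInf {i | m - hval α p r ≤ i ∧ i ≤ m ∧
      (hval α p r : ℝ) * pOrd p Finset.univ i ≤ ((i : ℝ) - m + hval α p r + 1) * α}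

/-- `b_q = max{1 ≤ i ≤ m : m·p_{(i)} ≤ i·q}` (with `b_q = 0` if no such `i`). -/
noncomputable def bval {m : ℕ} (q : ℝ) (p : Fin m → ℝ) : ℕ :=
  sSup {i | 1 ≤ i ∧ i ≤ m ∧ (m : ℝ) * pOrd p Finset.univ i ≤ (i : ℝ) * q}


namespace Stmt13Aux


lemma count_le_of_getD_le {l : List ℝ} (hs : l.Pairwise (· ≤ ·)) {k : ℕ} (hk : k < l.length)
    {c : ℝ} (h : l.getD k 0 ≤ c) : k + 1 ≤ l.countP (fun x => decide (x ≤ c)) := by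
  have hgetD : l.getD k 0 = l[k] := List.getD_eq_getElem l 0 hk
  have hlen : (l.take (k+1)).length = k + 1 := by rw [List.length_take]; omega
  have hall : ∀ a ∈ l.take (k+1), (fun x => decide (x ≤ c)) a = true := by
    intro a ha
    obtain ⟨i, hi, hia⟩ := List.mem_iff_getElem.mp ha
    have hi' : i < k + 1 := by omega
    have heq : (l.take (k+1))[i] = l[i]'(by omega) := List.getElem_take
    have hle : l[i]'(by omega) ≤ l[k] := by
      rcases Nat.lt_or_ge i k with h' | h'
      · exact (List.pairwise_iff_getElem.mp hs) i k (by omega) hk h'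
      · have : i = k := by omega
        subst this; exact le_refl _
    simp only [decide_eq_true_eq]
    rw [← hia, heq]
    exact le_trans hle (hgetD ▸ h)
  calc k + 1 = (l.take (k+1)).countP (fun x => decide (x ≤ c)) := by
        rw [List.countP_eq_length.mpr hall, hlen]
    _ ≤ l.countP (fun x => decide (x ≤ c)) := by
        conv_rhs => rw [← List.take_append_drop (k+1) l]
        rw [List.countP_append]; omega

lemma getD_le_of_count {l : List ℝ} (hs : l.Pairwise (· ≤ ·)) {k : ℕ} {c : ℝ}
    (h : k + 1 ≤ l.countP (fun x => decide (x ≤ c))) : l.getD k 0 ≤ c := by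
  have hk : k < l.length := lt_of_lt_of_le h List.countP_le_length
  have hgetD : l.getD k 0 = l[k] := List.getD_eq_getElem l 0 hk
  by_contra hcon
  push_neg at hcon
  rw [hgetD] at hcon
  have hdrop : (l.drop k).countP (fun x => decide (x ≤ c)) = 0 := by
    rw [List.countP_eq_zero]
    intro a ha
    obtain ⟨i, hi, hia⟩ := List.mem_iff_getElem.mp ha
    have hki : k + i < l.length := by simp only [List.length_drop] at hi; omega
    have hid : (l.drop k)[i] = l[k + i] := List.getElem_drop
    have hle : l[k] ≤ l[k+i] := by
      rcases Nat.eq_zero_or_pos i with h' | h'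
      · subst h'; exact le_of_eq (by congr 1)
      · exact ((List.pairwise_iff_getElem.mp hs) k (k+i) hk hki (by omega))
    simp only [decide_eq_true_eq]
    rw [← hia, hid]
    intro hac
    exact absurd (lt_of_le_of_lt (hle.trans hac) hcon) (lt_irrefl _)
  have : l.countP (fun x => decide (x ≤ c)) ≤ k := by
    conv_lhs => rw [← List.take_append_drop k l]
    rw [List.countP_append, hdrop]
    have := List.countP_le_length (l := l.take k) (p := fun x => decide (x ≤ c))
    rw [List.length_take] at this
    omega
  omega

end Stmt13Aux

namespace Stmt13Aux
variable {m : ℕ} {p : Fin m → ℝ} {I J S : Finset (Fin m)} {c : ℝ} {k : ℕ}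

/-- count of p-values `≤ c` in `I`. -/
noncomputable def cnt (p : Fin m → ℝ) (I : Finset (Fin m)) (c : ℝ) : ℕ :=
  Multiset.countP (fun x => x ≤ c) (I.val.map p)

lemma length_sortList (p : Fin m → ℝ) (I : Finset (Fin m)) :
    ((I.val.map p).sort (· ≤ ·)).length = I.card := by
  rw [Multiset.length_sort, Multiset.card_map]; rfl

lemma cnt_eq_list (p : Fin m → ℝ) (I : Finset (Fin m)) (c : ℝ) :
    cnt p I c = ((I.val.map p).sort (· ≤ ·)).countP (fun x => decide (x ≤ c)) := by
  conv_lhs => rw [cnt, ← Multiset.sort_eq (I.val.map p) (· ≤ ·)]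
  rw [Multiset.coe_countP]

lemma pOrd_le_iff (h1 : 1 ≤ k) (h2 : k ≤ I.card) :
    pOrd p I k ≤ c ↔ k ≤ cnt p I c := by
  rw [pOrd, cnt_eq_list]
  have hsort := Multiset.pairwise_sort (I.val.map p) (· ≤ ·)
  have hlen : k - 1 < ((I.val.map p).sort (· ≤ ·)).length := by
    rw [length_sortList]; omega
  constructor
  · intro h
    have := count_le_of_getD_le hsort hlen h
    omega
  · intro h
    exact getD_le_of_count hsort (by omega : k - 1 + 1 ≤ _)

lemma cnt_le_card : cnt p I c ≤ I.card := by
  rw [cnt]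
  have := Multiset.countP_le_card (fun x => x ≤ c) (I.val.map p)
  rwa [Multiset.card_map] at this

lemma cnt_mono (h : I ⊆ J) : cnt p I c ≤ cnt p J c :=
  Multiset.countP_le_of_le _ (Multiset.map_le_map (Finset.val_le_iff.mpr h))

lemma cnt_split (h : J ⊆ S) : cnt p S c ≤ cnt p J c + (S.card - J.card) := by
  have hval : J.val ≤ S.val := Finset.val_le_iff.mpr h
  have hdec : S.val = (S.val - J.val) + J.val := (tsub_add_cancel_of_le hval).symm
  have : cnt p S c = Multiset.countP (fun x => x ≤ c) ((S.val - J.val).map p) + cnt p J c := by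
    rw [cnt, cnt]
    conv_lhs => rw [hdec]
    rw [Multiset.map_add, Multiset.countP_add]
  rw [this]
  have h1 : Multiset.countP (fun x => x ≤ c) ((S.val - J.val).map p) ≤ S.card - J.card := by
    have := Multiset.countP_le_card (fun x => x ≤ c) ((S.val - J.val).map p)
    rw [Multiset.card_map, Multiset.card_sub hval] at this
    exact this
  omega

lemma cnt_eq_card_of_all (h : ∀ x ∈ I, p x ≤ c) : cnt p I c = I.card := by
  rw [cnt, show (I.card : ℕ) = Multiset.card (I.val.map p) by rw [Multiset.card_map]; rfl]
  rw [Multiset.countP_eq_card]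
  intro a ha
  obtain ⟨x, hx, rfl⟩ := Multiset.mem_map.mp ha
  exact h x hx

lemma pOrd_mem (h1 : 1 ≤ k) (h2 : k ≤ I.card) : ∃ x ∈ I, p x = pOrd p I k := by
  have hlen : k - 1 < ((I.val.map p).sort (· ≤ ·)).length := by rw [length_sortList]; omega
  have : pOrd p I k = ((I.val.map p).sort (· ≤ ·))[k-1] := List.getD_eq_getElem _ 0 hlen
  have hmem : pOrd p I k ∈ (I.val.map p).sort (· ≤ ·) := by
    rw [this]; exact List.getElem_mem _
  rw [Multiset.mem_sort] at hmem
  obtain ⟨x, hx, hxe⟩ := Multiset.mem_map.mp hmem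
  exact ⟨x, hx, hxe⟩

lemma pOrd_nonneg (hp : ∀ i, 0 ≤ p i) : 0 ≤ pOrd p I k := by
  rcases Nat.lt_or_ge (k - 1) ((I.val.map p).sort (· ≤ ·)).length with h | h
  · have : pOrd p I k = ((I.val.map p).sort (· ≤ ·))[k-1] := List.getD_eq_getElem _ 0 h
    rw [this]
    have hmem : ((I.val.map p).sort (· ≤ ·))[k-1] ∈ (I.val.map p).sort (· ≤ ·) :=
      List.getElem_mem _
    rw [Multiset.mem_sort] at hmem
    obtain ⟨x, _, hxe⟩ := Multiset.mem_map.mp hmem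
    rw [← hxe]; exact hp x
  · rw [pOrd, List.getD_eq_default _ _ h]

lemma pOrd_anti_subset (h : I ⊆ J) (h1 : 1 ≤ k) (h2 : k ≤ I.card) :
    pOrd p J k ≤ pOrd p I k := by
  rw [pOrd_le_iff h1 (le_trans h2 (card_le_card h))]
  exact le_trans ((pOrd_le_iff h1 h2).mp (le_refl _)) (cnt_mono h)

lemma pOrd_le_of_all (h : ∀ x ∈ I, p x ≤ c) (h1 : 1 ≤ k) (h2 : k ≤ I.card) :
    pOrd p I k ≤ c := by
  rw [pOrd_le_iff h1 h2, cnt_eq_card_of_all h]; exact h2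

end Stmt13Aux

namespace Stmt13Aux
variable {m : ℕ} {p : Fin m → ℝ} {r : Fin m → Fin m}

lemma card_filter_lt (c : ℕ) (hc : c ≤ m) :
    ((univ : Finset (Fin m)).filter fun j : Fin m => (j : ℕ) < c).card = c := by
  have h : ((univ : Finset (Fin m)).filter fun j : Fin m => (j : ℕ) < c)
      = (Finset.range c).attachFin (fun x hx => lt_of_lt_of_le (Finset.mem_range.mp hx) hc) := by
    ext j
    simp [Finset.mem_attachFin, Finset.mem_range]
  rw [h, Finset.card_attachFin, Finset.card_range]

lemma card_filter_ge (n : ℕ) (hn : n ≤ m) :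
    ((univ : Finset (Fin m)).filter fun j : Fin m => m - n ≤ (j : ℕ)).card = n := by
  have h := Finset.card_filter_add_card_filter_not
    (s := (univ : Finset (Fin m))) (p := fun j : Fin m => m - n ≤ (j : ℕ))
  have h2 : ((univ : Finset (Fin m)).filter fun j : Fin m => ¬ (m - n ≤ (j : ℕ))).card = m - n := by
    have : ((univ : Finset (Fin m)).filter fun j : Fin m => ¬ (m - n ≤ (j : ℕ)))
        = ((univ : Finset (Fin m)).filter fun j : Fin m => (j : ℕ) < m - n) := by
      apply Finset.filter_congr; intro j _; exact not_le
    rw [this, card_filter_lt _ (by omega)]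
  have h3 : (univ : Finset (Fin m)).card = m := by simp
  omega

lemma card_Lset (hr : Function.Injective r) {b : ℕ} (hb : b ≤ m) : (Lset r b).card = b := by
  rw [Lset, Finset.card_image_of_injective _ hr, card_filter_lt _ hb]

lemma card_Kset (hr : Function.Injective r) {n : ℕ} (hn : n ≤ m) : (Kset r n).card = n := by
  rw [Kset, Finset.card_image_of_injective _ hr, card_filter_ge _ hn]

lemma Lset_zero : Lset r 0 = (∅ : Finset (Fin m)) := by
  rw [Lset]
  have : ((univ : Finset (Fin m)).filter fun j : Fin m => (j : ℕ) < 0) = ∅ := by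
    ext j; simp
  rw [this, Finset.image_empty]

lemma Kset_zero : Kset r 0 = (∅ : Finset (Fin m)) := by
  rw [Kset]
  have : ((univ : Finset (Fin m)).filter fun j : Fin m => m - 0 ≤ (j : ℕ)) = ∅ := by
    ext j
    simp only [Finset.mem_filter, Finset.mem_univ, true_and, Finset.notMem_empty, iff_false]
    have := j.2; omega
  rw [this, Finset.image_empty]

lemma sort_univ (hr : Function.Bijective r)
    (hmono : ∀ i j : Fin m, i ≤ j → p (r i) ≤ p (r j)) :
    (((univ : Finset (Fin m)).val.map p).sort (· ≤ ·)) = List.ofFn (fun j => p (r j)) := by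
  have himg : Finset.image r univ = univ := Finset.image_univ_of_surjective hr.2
  have hval : (univ : Finset (Fin m)).val = Multiset.map r univ.val := by
    conv_lhs => rw [← himg]
    exact Finset.image_val_of_injOn (hr.1.injOn)
  have h1 : (univ : Finset (Fin m)).val.map p = ↑(List.ofFn fun j => p (r j)) := by
    rw [hval, Multiset.map_map, Fin.univ_def]
    show Multiset.map (p ∘ r) ↑(List.finRange m) = _
    rw [Multiset.map_coe, ← List.ofFn_eq_map]
    rfl
  rw [h1]
  have hperm : ((↑(List.ofFn fun j => p (r j)) : Multiset ℝ).sort (· ≤ ·)).Perm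
      (List.ofFn fun j => p (r j)) :=
    Multiset.coe_eq_coe.mp (by rw [Multiset.sort_eq])
  exact List.Perm.eq_of_pairwise' (Multiset.pairwise_sort _ _)
    (List.pairwise_ofFn.mpr (fun a b hab => hmono a b hab.le)) hperm

lemma pOrd_univ (hr : Function.Bijective r)
    (hmono : ∀ i j : Fin m, i ≤ j → p (r i) ≤ p (r j))
    {k : ℕ} (h1 : 1 ≤ k) (h2 : k ≤ m) :
    pOrd p (univ : Finset (Fin m)) k = p (r ⟨k - 1, by omega⟩) := by
  rw [pOrd, sort_univ hr hmono]
  have hlen : k - 1 < (List.ofFn fun j => p (r j)).length := by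
    rw [List.length_ofFn]; omega
  rw [List.getD_eq_getElem _ 0 hlen, List.getElem_ofFn]

end Stmt13Aux

namespace Stmt13Aux

variable {m : ℕ} {α : ℝ} {p : Fin m → ℝ} {r : Fin m → Fin m}

lemma card_fin_le (J : Finset (Fin m)) : J.card ≤ m := by
  simpa using Finset.card_le_univ J

lemma card_univ_fin : (univ : Finset (Fin m)).card = m := by simp

lemma pOrd_le_pOrd_univ (J : Finset (Fin m)) {k : ℕ} (h1 : 1 ≤ k) (h2 : k ≤ J.card) :
    pOrd p J k ≤ pOrd p (univ : Finset (Fin m)) (m - J.card + k) := by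
  have hJm : J.card ≤ m := card_fin_le J
  set c := pOrd p (univ : Finset (Fin m)) (m - J.card + k) with hc
  have hi1 : 1 ≤ m - J.card + k := by omega
  have hi2 : m - J.card + k ≤ (univ : Finset (Fin m)).card := by rw [card_univ_fin]; omega
  have hcnt : m - J.card + k ≤ cnt p (univ : Finset (Fin m)) c :=
    (pOrd_le_iff hi1 hi2).mp (le_refl _)
  have hsplit : cnt p (univ : Finset (Fin m)) c ≤ cnt p J c + (m - J.card) := by
    have := cnt_split (p := p) (c := c) (Finset.subset_univ J)
    rwa [card_univ_fin] at this
  refine (pOrd_le_iff h1 h2).mpr ?_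
  omega

lemma pOrd_univ_le_pOrd_K (hr : Function.Bijective r)
    (hmono : ∀ i j : Fin m, i ≤ j → p (r i) ≤ p (r j))
    {n k : ℕ} (hn : n ≤ m) (h1 : 1 ≤ k) (h2 : k ≤ n) :
    pOrd p (univ : Finset (Fin m)) (m - n + k) ≤ pOrd p (Kset r n) k := by
  have hcardK : (Kset r n).card = n := card_Kset hr.1 hn
  set c := pOrd p (Kset r n) k with hc
  -- c is attained by some element of Kset
  obtain ⟨y, hyK, hyc⟩ := pOrd_mem (p := p) h1 (by rw [hcardK]; omega)
  obtain ⟨s, hs, rfl⟩ : ∃ s : Fin m, (m - n ≤ (s : ℕ)) ∧ r s = y := by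
    rw [Kset, Finset.mem_image] at hyK
    obtain ⟨s, hs, rfl⟩ := hyK
    rw [Finset.mem_filter] at hs
    exact ⟨s, hs.2, rfl⟩
  -- all elements outside Kset have p ≤ c
  have hout : ∀ x ∈ (univ : Finset (Fin m)) \ Kset r n, p x ≤ c := by
    intro x hx
    rw [Finset.mem_sdiff] at hx
    obtain ⟨j, rfl⟩ := hr.2 x
    have hj : (j : ℕ) < m - n := by
      by_contra hcon
      exact hx.2 (by rw [Kset, Finset.mem_image]
                     exact ⟨j, Finset.mem_filter.mpr ⟨Finset.mem_univ _, by omega⟩, rfl⟩)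
    rw [hc, ← hyc]
    exact hmono j s (by rw [Fin.le_def]; omega)
  -- count in univ
  have hsub : Kset r n ⊆ univ := Finset.subset_univ _
  have hdec : (univ : Finset (Fin m)).val = ((univ : Finset (Fin m)) \ Kset r n).val + (Kset r n).val := by
    rw [Finset.sdiff_val]
    exact (tsub_add_cancel_of_le (Finset.val_le_iff.mpr hsub)).symm
  have hcnt_univ : cnt p (univ : Finset (Fin m)) c
      = cnt p ((univ : Finset (Fin m)) \ Kset r n) c + cnt p (Kset r n) c := by
    rw [cnt, cnt, cnt]
    conv_lhs => rw [hdec]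
    rw [Multiset.map_add, Multiset.countP_add]
  have hcnt_out : cnt p ((univ : Finset (Fin m)) \ Kset r n) c = m - n := by
    rw [cnt_eq_card_of_all hout, Finset.card_sdiff_of_subset hsub, card_univ_fin, hcardK]
  have hcnt_K : k ≤ cnt p (Kset r n) c :=
    (pOrd_le_iff h1 (by rw [hcardK]; omega)).mp (le_refl _)
  refine (pOrd_le_iff (by omega) (by rw [card_univ_fin]; omega)).mpr ?_
  omega

end Stmt13Aux

namespace Stmt13Aux

variable {m : ℕ} {α : ℝ} {p : Fin m → ℝ} {r : Fin m → Fin m}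

lemma not_simes_empty : ¬ SimesU α p (∅ : Finset (Fin m)) := by
  rintro ⟨i, h1, h2, _⟩
  simp at h2
  omega

lemma not_closedX_empty : ¬ ClosedX α p (∅ : Finset (Fin m)) := by
  intro h
  exact not_simes_empty (h ∅ (Finset.Subset.refl _))

lemma simes_of_simes_K (hr : Function.Bijective r)
    (hmono : ∀ i j : Fin m, i ≤ j → p (r i) ≤ p (r j))
    {J : Finset (Fin m)} (hJ1 : 1 ≤ J.card)
    (hK : SimesU α p (Kset r J.card)) : SimesU α p J := by
  obtain ⟨k, hk1, hk2, hineq⟩ := hK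
  have hJm : J.card ≤ m := card_fin_le J
  have hcardK : (Kset r J.card).card = J.card := card_Kset hr.1 hJm
  rw [hcardK] at hk2 hineq
  have hle : pOrd p J k ≤ pOrd p (Kset r J.card) k :=
    le_trans (pOrd_le_pOrd_univ J hk1 hk2) (pOrd_univ_le_pOrd_K hr hmono hJm hk1 hk2)
  exact ⟨k, hk1, hk2, le_trans (by
    have : (J.card : ℝ) ≥ 0 := by positivity
    nlinarith) hineq⟩

lemma hval_bddAbove : BddAbove {i | i ≤ m ∧ ¬ SimesU α p (Kset r i)} :=
  ⟨m, fun _ hi => hi.1⟩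

lemma card_le_hval (hr : Function.Bijective r)
    (hmono : ∀ i j : Fin m, i ≤ j → p (r i) ≤ p (r j))
    {J : Finset (Fin m)} (hJ : ¬ SimesU α p J) : J.card ≤ hval α p r := by
  rcases Nat.eq_zero_or_pos J.card with h0 | h1
  · rw [h0]; exact Nat.zero_le _
  · have hKn : ¬ SimesU α p (Kset r J.card) := fun hK => hJ (simes_of_simes_K hr hmono h1 hK)
    exact le_csSup hval_bddAbove ⟨card_fin_le J, hKn⟩

lemma simes_of_gt_hval (hr : Function.Bijective r)
    (hmono : ∀ i j : Fin m, i ≤ j → p (r i) ≤ p (r j))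
    {J : Finset (Fin m)} (hJ : hval α p r < J.card) : SimesU α p J := by
  by_contra hcon
  exact absurd (card_le_hval hr hmono hcon) (not_le.mpr hJ)

lemma tval_mem (S : Finset (Fin m)) :
    ∃ I, I ⊆ S ∧ ¬ ClosedX α p I ∧ I.card = tval α p S := by
  have h0 : (0 : ℕ) ∈ {k | ∃ I, I ⊆ S ∧ ¬ ClosedX α p I ∧ I.card = k} :=
    ⟨∅, Finset.empty_subset _, not_closedX_empty, Finset.card_empty⟩
  have hbdd : BddAbove {k | ∃ I, I ⊆ S ∧ ¬ ClosedX α p I ∧ I.card = k} := by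
    refine ⟨S.card, ?_⟩
    rintro k ⟨I, hIS, _, rfl⟩
    exact Finset.card_le_card hIS
  exact Nat.sSup_mem ⟨0, h0⟩ hbdd

lemma tval_le_card (S : Finset (Fin m)) : tval α p S ≤ S.card := by
  obtain ⟨I, hIS, _, hc⟩ := tval_mem (α := α) S
  rw [← hc]
  exact Finset.card_le_card hIS

lemma tval_eq_zero_iff {S : Finset (Fin m)} :
    tval α p S = 0 ↔ ∀ I, I ⊆ S → ¬ ClosedX α p I → I.card = 0 := by
  constructor
  · intro ht I hIS hnX
    by_contra hcon
    have hmem : I.card ∈ {k | ∃ I, I ⊆ S ∧ ¬ ClosedX α p I ∧ I.card = k} := ⟨I, hIS, hnX, rfl⟩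
    have hbdd : BddAbove {k | ∃ I, I ⊆ S ∧ ¬ ClosedX α p I ∧ I.card = k} := by
      refine ⟨S.card, ?_⟩
      rintro k ⟨I, hIS, _, rfl⟩
      exact Finset.card_le_card hIS
    have := le_csSup hbdd hmem
    rw [tval] at ht
    omega
  · intro h
    obtain ⟨I, hIS, hnX, hc⟩ := tval_mem (α := α) S
    rw [← hc]
    exact h I hIS hnX

lemma bval_spec {q : ℝ} (hb : bval q p ≠ 0) :
    1 ≤ bval q p ∧ bval q p ≤ m ∧
      (m : ℝ) * pOrd p (univ : Finset (Fin m)) (bval q p) ≤ (bval q p : ℝ) * q := by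
  set Sb := {i | 1 ≤ i ∧ i ≤ m ∧ (m : ℝ) * pOrd p (univ : Finset (Fin m)) i ≤ (i : ℝ) * q}
  have hne : Sb.Nonempty := by
    by_contra hcon
    rw [Set.not_nonempty_iff_eq_empty] at hcon
    rw [bval, show {i | 1 ≤ i ∧ i ≤ m ∧ (m : ℝ) * pOrd p Finset.univ i ≤ (i : ℝ) * q} = Sb from rfl,
      hcon, csSup_empty] at hb
    exact hb Nat.bot_eq_zero
  have hbdd : BddAbove Sb := ⟨m, fun _ hi => hi.2.1⟩
  have := Nat.sSup_mem hne hbdd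
  exact this

lemma mem_Lset_p_le (hr : Function.Bijective r)
    (hmono : ∀ i j : Fin m, i ≤ j → p (r i) ≤ p (r j))
    {b : ℕ} (hb1 : 1 ≤ b) (hb2 : b ≤ m) {x : Fin m} (hx : x ∈ Lset r b) :
    p x ≤ pOrd p (univ : Finset (Fin m)) b := by
  rw [Lset, Finset.mem_image] at hx
  obtain ⟨j, hj, rfl⟩ := hx
  rw [Finset.mem_filter] at hj
  rw [pOrd_univ hr hmono hb1 hb2]
  exact hmono j ⟨b - 1, by omega⟩ (by rw [Fin.le_def]; simp; omega)

end Stmt13Aux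

theorem stmt13
    (m : ℕ) (hm : 1 ≤ m) (α : ℝ) (hα : 0 ≤ α ∧ α ≤ 1)
    (p : Fin m → ℝ) (hp : ∀ i, 0 ≤ p i ∧ p i ≤ 1)
    (r : Fin m → Fin m) (hr : Function.Bijective r)
    (hmono : ∀ i j : Fin m, i ≤ j → p (r i) ≤ p (r j))
    (q : ℝ) (hq : 0 ≤ q ∧ q ≤ 1) :
    α * qval α p (Lset r (bval q p)) ≤ (hval α p r : ℝ) / m * q ∧
    (α * qval α p (Lset r (bval q p)) = (hval α p r : ℝ) / m * q ↔
      (hval α p r : ℝ) * q = 0) := by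
  classical
  have hm0 : (0:ℝ) < m := by exact_mod_cast hm
  -- zero lemma
  have hLHS0 : (hval α p r = 0 ∨ q = 0) → α * qval α p (Lset r (bval q p)) = 0 := by
    intro hcase
    have ht0 : tval α p (Lset r (bval q p)) = 0 := by
      rcases hcase with hh0 | hq0
      · rw [Stmt13Aux.tval_eq_zero_iff]
        intro I hIS hnX
        by_contra hc
        apply hnX
        intro J hIJ
        apply Stmt13Aux.simes_of_gt_hval hr hmono
        have : 1 ≤ I.card := Nat.one_le_iff_ne_zero.mpr hc
        have := Finset.card_le_card hIJ
        omega
      · subst hq0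
        rcases Nat.eq_zero_or_pos (bval 0 p) with hb0 | hb1
        · rw [hb0, Stmt13Aux.Lset_zero]
          rw [Stmt13Aux.tval_eq_zero_iff]
          intro I hIS _
          rw [Finset.subset_empty.mp hIS, Finset.card_empty]
        · obtain ⟨hb1', hbm, hbq⟩ := Stmt13Aux.bval_spec (p := p) (q := (0:ℝ))
            (Nat.one_le_iff_ne_zero.mp hb1)
          have hpu0 : pOrd p (univ : Finset (Fin m)) (bval 0 p) = 0 := by
            have hnn : 0 ≤ pOrd p (univ : Finset (Fin m)) (bval 0 p) :=
              Stmt13Aux.pOrd_nonneg (fun i => (hp i).1)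
            nlinarith
          rw [Stmt13Aux.tval_eq_zero_iff]
          intro I hIS hnX
          by_contra hc
          have hI1 : 1 ≤ I.card := Nat.one_le_iff_ne_zero.mpr hc
          apply hnX
          intro J hIJ
          refine ⟨1, le_refl _, le_trans hI1 (Finset.card_le_card hIJ), ?_⟩
          have h1 : pOrd p J 1 ≤ pOrd p I 1 := Stmt13Aux.pOrd_anti_subset hIJ (le_refl _) hI1
          have h2 : pOrd p I 1 ≤ 0 := by
            refine Stmt13Aux.pOrd_le_of_all ?_ (le_refl _) hI1
            intro x hx
            rw [← hpu0]
            exact Stmt13Aux.mem_Lset_p_le hr hmono hb1' hbm (hIS hx)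
          have h3 : (0:ℝ) ≤ (J.card : ℝ) := by positivity
          nlinarith [hα.1]
    rw [qval, ht0]
    split_ifs with hB
    · ring
    · simp
  by_cases hzero : (hval α p r : ℝ) * q = 0
  · have hcase : hval α p r = 0 ∨ q = 0 := by
      rcases mul_eq_zero.mp hzero with h' | h'
      · exact Or.inl (by exact_mod_cast h')
      · exact Or.inr h'
    have hlhs := hLHS0 hcase
    have hrhs : (hval α p r : ℝ) / m * q = 0 := by
      rcases hcase with h' | h'
      · rw [h']; simp
      · rw [h']; ring
    rw [hlhs, hrhs]
    exact ⟨le_refl _, ⟨fun _ => hzero, fun _ => rfl⟩⟩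
  · -- strict case
    have hne : (hval α p r : ℝ) ≠ 0 ∧ q ≠ 0 := by
      constructor <;> intro h' <;> apply hzero <;> rw [h'] <;> ring
    have hh1 : 1 ≤ hval α p r := by
      by_contra h'
      exact hne.1 (by simp [Nat.lt_one_iff.mp (not_le.mp h')])
    have hh0 : (0:ℝ) < (hval α p r : ℝ) := by exact_mod_cast hh1
    have hq0 : 0 < q := lt_of_le_of_ne hq.1 (Ne.symm hne.2)
    have hstrict : α * qval α p (Lset r (bval q p)) < (hval α p r : ℝ) / m * q := by
      rcases Nat.eq_zero_or_pos (bval q p) with hb0 | hb1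
      · have : qval α p (Lset r (bval q p)) = 0 := by
          rw [hb0, Stmt13Aux.Lset_zero, qval, if_pos rfl]
        rw [this, mul_zero]
        positivity
      · obtain ⟨hb1', hbm, hbq⟩ := Stmt13Aux.bval_spec (p := p) (q := q)
          (Nat.one_le_iff_ne_zero.mp hb1)
        have hb0' : (0:ℝ) < (bval q p : ℝ) := by exact_mod_cast hb1'
        have hcardB : (Lset r (bval q p)).card = bval q p := Stmt13Aux.card_Lset hr.1 hbm
        have hBne : Lset r (bval q p) ≠ ∅ := by
          intro h'
          rw [h', Finset.card_empty] at hcardB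
          omega
        have hqv : qval α p (Lset r (bval q p))
            = (tval α p (Lset r (bval q p)) : ℝ) / (bval q p : ℝ) := by
          rw [qval, if_neg hBne, hcardB]
        rw [hqv]
        have key : α * (tval α p (Lset r (bval q p)) : ℝ) * m
            < (hval α p r : ℝ) * q * (bval q p : ℝ) := by
          rcases Nat.eq_zero_or_pos (tval α p (Lset r (bval q p))) with ht0 | ht1
          · rw [ht0]
            push_cast
            rw [mul_zero, zero_mul]
            positivity
          · obtain ⟨I, hIB, hnX, hcardI⟩ := Stmt13Aux.tval_mem (α := α) (Lset r (bval q p))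
            rw [ClosedX] at hnX
            push_neg at hnX
            obtain ⟨J, hIJ, hnU⟩ := hnX
            set t := tval α p (Lset r (bval q p)) with htdef
            have htI : I.card = t := hcardI
            have htJ : t ≤ J.card := htI ▸ Finset.card_le_card hIJ
            have hJh : J.card ≤ hval α p r := Stmt13Aux.card_le_hval hr hmono hnU
            have hJt : (t:ℝ) * α < (J.card : ℝ) * pOrd p J t := by
              rw [SimesU] at hnU
              push_neg at hnU
              exact hnU t ht1 htJ
            have h2 : pOrd p J t ≤ pOrd p I t :=
              Stmt13Aux.pOrd_anti_subset hIJ ht1 (le_of_eq htI.symm)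
            have h3 : pOrd p I t ≤ pOrd p (univ : Finset (Fin m)) (bval q p) := by
              refine Stmt13Aux.pOrd_le_of_all ?_ ht1 (le_of_eq htI.symm)
              intro x hx
              exact Stmt13Aux.mem_Lset_p_le hr hmono hb1' hbm (hIB hx)
            have hptI : 0 ≤ pOrd p I t := Stmt13Aux.pOrd_nonneg (fun i => (hp i).1)
            have hJc0 : (0:ℝ) ≤ (J.card : ℝ) := by positivity
            have hJch : (J.card : ℝ) ≤ (hval α p r : ℝ) := by exact_mod_cast hJh
            have s1 : (t:ℝ) * α < (J.card : ℝ) * pOrd p I t :=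
              lt_of_lt_of_le hJt (mul_le_mul_of_nonneg_left h2 hJc0)
            have s2 : (J.card : ℝ) * pOrd p I t ≤ (hval α p r : ℝ) * pOrd p I t :=
              mul_le_mul_of_nonneg_right hJch hptI
            have s3 : (hval α p r : ℝ) * pOrd p I t
                ≤ (hval α p r : ℝ) * pOrd p (univ : Finset (Fin m)) (bval q p) :=
              mul_le_mul_of_nonneg_left h3 (le_of_lt hh0)
            have s4 : (t:ℝ) * α < (hval α p r : ℝ) * pOrd p (univ : Finset (Fin m)) (bval q p) :=
              lt_of_lt_of_le s1 (le_trans s2 s3)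
            have s5 : (m:ℝ) * ((t:ℝ) * α)
                < (m:ℝ) * ((hval α p r : ℝ) * pOrd p (univ : Finset (Fin m)) (bval q p)) :=
              mul_lt_mul_of_pos_left s4 hm0
            have s7 : (hval α p r : ℝ) * ((m:ℝ) * pOrd p (univ : Finset (Fin m)) (bval q p))
                ≤ (hval α p r : ℝ) * ((bval q p : ℝ) * q) :=
              mul_le_mul_of_nonneg_left hbq (le_of_lt hh0)
            nlinarith
        rw [show α * ((tval α p (Lset r (bval q p)) : ℝ) / (bval q p : ℝ))
              = (α * (tval α p (Lset r (bval q p)) : ℝ)) / (bval q p : ℝ) by ring,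
            show (hval α p r : ℝ) / (m:ℝ) * q = ((hval α p r : ℝ) * q) / (m:ℝ) by ring,
            div_lt_div_iff₀ hb0' hm0]
        exact key
    exact ⟨le_of_lt hstrict, ⟨fun heq => absurd heq (ne_of_lt hstrict),
      fun hz => absurd hz hzero⟩⟩
end

section
/- If h ≥ 1, then for every x ∈ [0,1): |{1 ≤ k ≤ m : p_k > x·α}| ≥ h·(1−x); and if 1 ≤ h < m, then there exists x ∈ (0,1) such that |{1 ≤ k ≤ m : p_k > x·α}| ≤ (h+1)·(1−x). -/
open Finset

attribute [local instance] Classical.propDecidable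

section Aux
variable {m : ℕ} (p : Fin m → ℝ) (r : Fin m → Fin m)

lemma filter_ge_eq (a : ℕ) :
    (Finset.univ.filter fun l : Fin m => a ≤ (l : ℕ)) =
      Finset.image (fun l : Fin (m - a) => (⟨a + (l : ℕ), by have := l.isLt; omega⟩ : Fin m))
        Finset.univ := by
  ext j
  simp only [mem_filter, mem_univ, true_and, mem_image]
  constructor
  · intro hj
    exact ⟨⟨(j : ℕ) - a, by have := j.isLt; omega⟩, by ext; simp; omega⟩
  · rintro ⟨l, rfl⟩
    simp

lemma card_filter_ge (a : ℕ) :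
    (Finset.univ.filter fun l : Fin m => a ≤ (l : ℕ)).card = m - a := by
  rw [filter_ge_eq]
  rw [Finset.card_image_of_injective _ (fun x y hxy => by
    have := congrArg Fin.val hxy
    simp only at this
    exact Fin.ext (by omega))]
  simp

lemma Kset_eq_image (hr : Function.Injective r) (i : ℕ) (hi : i ≤ m) :
    Kset r i = Finset.image
      (fun l : Fin i => r ⟨m - i + (l : ℕ), by have := l.isLt; omega⟩) Finset.univ := by
  unfold Kset
  rw [filter_ge_eq, Finset.image_image]
  ext k
  simp only [mem_image, mem_univ, true_and, Function.comp_apply]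
  constructor
  · rintro ⟨l, rfl⟩
    exact ⟨⟨(l : ℕ), by have := l.isLt; omega⟩, rfl⟩
  · rintro ⟨l, rfl⟩
    exact ⟨⟨(l : ℕ), by have := l.isLt; omega⟩, rfl⟩

lemma map_inj (hr : Function.Injective r) (i : ℕ) (hi : i ≤ m) :
    Function.Injective
      (fun l : Fin i => r ⟨m - i + (l : ℕ), by have := l.isLt; omega⟩) := by
  intro a b hab
  have := congrArg Fin.val (hr hab)
  simp only at this
  exact Fin.ext (by omega)

lemma card_Kset (hr : Function.Injective r) (i : ℕ) (hi : i ≤ m) :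
    (Kset r i).card = i := by
  rw [Kset_eq_image r hr i hi, Finset.card_image_of_injective _ (map_inj r hr i hi)]
  simp

lemma sort_Kset (hr : Function.Injective r)
    (hmono : ∀ i j : Fin m, i ≤ j → p (r i) ≤ p (r j)) (i : ℕ) (hi : i ≤ m) :
    ((Kset r i).val.map p).sort (· ≤ ·) =
      List.ofFn (fun l : Fin i => p (r ⟨m - i + (l : ℕ), by have := l.isLt; omega⟩)) := by
  have hms : ((Kset r i).val.map p : Multiset ℝ) =
      ↑(List.ofFn (fun l : Fin i => p (r ⟨m - i + (l : ℕ), by have := l.isLt; omega⟩))) := by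
    rw [Kset_eq_image r hr i hi,
      Finset.image_val_of_injOn ((map_inj r hr i hi).injOn), Multiset.map_map,
      ← Fin.univ_val_map]
    rfl
  refine (fun hperm hs2 => List.Perm.eq_of_pairwise' (Multiset.pairwise_sort ..) hs2 hperm) ?_ ?_
  · rw [← Multiset.coe_eq_coe, Multiset.sort_eq, hms]
  · rw [List.pairwise_ofFn]
    intro a b hab
    exact hmono _ _ (by simp only [Fin.mk_le_mk]; omega)

lemma pOrd_Kset (hr : Function.Injective r)
    (hmono : ∀ i j : Fin m, i ≤ j → p (r i) ≤ p (r j)) (i : ℕ) (hi : i ≤ m)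
    (j : ℕ) (hj1 : 1 ≤ j) (hj2 : j ≤ i) :
    pOrd p (Kset r i) j = p (r ⟨m - i + (j - 1), by omega⟩) := by
  unfold pOrd
  rw [sort_Kset p r hr hmono i hi]
  have hlen : j - 1 < (List.ofFn (fun l : Fin i =>
      p (r ⟨m - i + (l : ℕ), by have := l.isLt; omega⟩))).length := by
    simp; omega
  rw [List.getD_eq_getElem _ _ hlen, List.getElem_ofFn]

end Aux


section Hfacts
variable {m : ℕ} (p : Fin m → ℝ) (r : Fin m → Fin m)

lemma hval_spec (α : ℝ) (hr : Function.Injective r) :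
    hval α p r ≤ m ∧ ¬ SimesU α p (Kset r (hval α p r)) := by
  have h0 : 0 ∈ {i | i ≤ m ∧ ¬ SimesU α p (Kset r i)} := by
    refine ⟨Nat.zero_le m, ?_⟩
    rintro ⟨i, hi1, hi2, -⟩
    rw [card_Kset r hr 0 (Nat.zero_le m)] at hi2
    omega
  have hbdd : BddAbove {i | i ≤ m ∧ ¬ SimesU α p (Kset r i)} := ⟨m, fun x hx => hx.1⟩
  exact Nat.sSup_mem ⟨0, h0⟩ hbdd

lemma hval_succ (α : ℝ) (hlt : hval α p r < m) :
    SimesU α p (Kset r (hval α p r + 1)) := by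
  by_contra hc
  have hmem : hval α p r + 1 ∈ {i | i ≤ m ∧ ¬ SimesU α p (Kset r i)} := ⟨by omega, hc⟩
  have hb := le_csSup (⟨m, fun x hx => hx.1⟩ :
    BddAbove {i | i ≤ m ∧ ¬ SimesU α p (Kset r i)}) hmem
  have h2 : hval α p r + 1 ≤ hval α p r := hb
  omega

end Hfacts

theorem stmt14
    (m : ℕ) (hm : 1 ≤ m) (α : ℝ) (hα : 0 ≤ α ∧ α ≤ 1)
    (p : Fin m → ℝ) (hp : ∀ i, 0 ≤ p i ∧ p i ≤ 1)
    (r : Fin m → Fin m) (hr : Function.Bijective r)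
    (hmono : ∀ i j : Fin m, i ≤ j → p (r i) ≤ p (r j)) :
    (1 ≤ hval α p r → ∀ x : ℝ, 0 ≤ x → x < 1 →
      (hval α p r : ℝ) * (1 - x) ≤
        ((Finset.univ.filter fun k : Fin m => x * α < p k).card : ℝ)) ∧
    (1 ≤ hval α p r → hval α p r < m → ∃ x : ℝ, 0 < x ∧ x < 1 ∧
      ((Finset.univ.filter fun k : Fin m => x * α < p k).card : ℝ) ≤
        ((hval α p r : ℝ) + 1) * (1 - x)) := by
  obtain ⟨hα0, hα1⟩ := hα
  obtain ⟨hhm, hK⟩ := hval_spec p r α hr.injective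
  obtain ⟨h, hhdef⟩ : ∃ n, n = hval α p r := ⟨_, rfl⟩
  rw [← hhdef] at hhm hK ⊢
  have key : ∀ l : Fin m, m - h ≤ (l : ℕ) →
      ((((l : ℕ) - (m - h) + 1 : ℕ)) : ℝ) * α < (h : ℝ) * p (r l) := by
    intro l hl
    have hlm := l.isLt
    set j := (l : ℕ) - (m - h) + 1 with hjdef
    have hj1 : 1 ≤ j := by omega
    have hj2 : j ≤ h := by omega
    by_contra hc
    push_neg at hc
    refine hK ⟨j, hj1, ?_, ?_⟩
    · rw [card_Kset r hr.injective h hhm]; exact hj2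
    · rw [card_Kset r hr.injective h hhm,
        pOrd_Kset p r hr.injective hmono h hhm j hj1 hj2]
      have hidx : (⟨m - h + (j - 1), by omega⟩ : Fin m) = l := Fin.ext (by simp; omega)
      rw [hidx]
      exact hc
  constructor
  · intro h1 x hx0 hx1
    have hh0 : (0:ℝ) < h := by exact_mod_cast h1
    set c := max (⌈(h:ℝ)*x⌉₊) 1 with hcdef
    have hc1 : 1 ≤ c := le_max_right _ _
    have hch : c ≤ h := by
      refine max_le (Nat.ceil_le.mpr ?_) h1
      nlinarith
    have hcx : (c:ℝ) ≤ (h:ℝ)*x + 1 := by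
      rw [hcdef, Nat.cast_max]
      exact max_le (Nat.ceil_lt_add_one (by positivity)).le (by push_cast; nlinarith)
    set s0 := m - h + (c - 1) with hs0
    have hsub : (Finset.univ.filter fun l : Fin m => s0 ≤ (l:ℕ)).image r ⊆
        Finset.univ.filter fun k : Fin m => x * α < p k := by
      intro k hk
      simp only [mem_image, mem_filter, mem_univ, true_and] at hk ⊢
      obtain ⟨l, hl, rfl⟩ := hk
      have hlm := l.isLt
      have hkey := key l (by omega)
      set j := (l:ℕ) - (m - h) + 1 with hjdef
      have hcj : (h:ℝ)*x ≤ (j:ℝ) := by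
        have hcj2 : c ≤ j := by omega
        calc (h:ℝ)*x ≤ (⌈(h:ℝ)*x⌉₊:ℝ) := Nat.le_ceil _
          _ ≤ (c:ℝ) := by exact_mod_cast le_max_left _ 1
          _ ≤ (j:ℝ) := by exact_mod_cast hcj2
      nlinarith [mul_le_mul_of_nonneg_right hcj hα0]
    have hcard : ((Finset.univ.filter fun l : Fin m => s0 ≤ (l:ℕ)).image r).card
        = h - c + 1 := by
      rw [Finset.card_image_of_injective _ hr.injective, card_filter_ge]
      omega
    have hle := Finset.card_le_card hsub
    rw [hcard] at hle
    have hle2 : ((h - c + 1 : ℕ) : ℝ) ≤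
        ((Finset.univ.filter fun k : Fin m => x * α < p k).card : ℝ) := by
      exact_mod_cast hle
    have hcast : ((h - c + 1 : ℕ) : ℝ) = (h:ℝ) - c + 1 := by
      push_cast [hch]; ring
    calc (h:ℝ)*(1-x) = (h:ℝ) - (h:ℝ)*x := by ring
      _ ≤ (h:ℝ) - c + 1 := by linarith
      _ = ((h - c + 1 : ℕ) : ℝ) := hcast.symm
      _ ≤ _ := hle2
  · intro h1 hlt
    have hsucc := hval_succ p r α (by rw [← hhdef]; exact hlt)
    rw [← hhdef] at hsucc
    obtain ⟨j, hj1, hj2, hle⟩ := hsucc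
    rw [card_Kset r hr.injective (h+1) (by omega)] at hj2 hle
    rw [pOrd_Kset p r hr.injective hmono (h+1) (by omega) j hj1 hj2] at hle
    have hh0 : (0:ℝ) < h := by exact_mod_cast h1
    have hpm : α < p (r ⟨m - 1, by omega⟩) := by
      have hkey := key ⟨m - 1, by omega⟩ (by simp; omega)
      have hval' : ((⟨m - 1, by omega⟩ : Fin m) : ℕ) - (m - h) + 1 = h := by
        simp; omega
      rw [hval'] at hkey
      nlinarith
    have hjh : j ≤ h := by
      by_contra hc
      have hjeq : j = h + 1 := by omega
      subst hjeq
      have hidx : (⟨m - (h+1) + (h+1-1), by omega⟩ : Fin m) = ⟨m-1, by omega⟩ :=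
        Fin.ext (by simp; omega)
      rw [hidx] at hle
      push_cast at hle
      nlinarith
    refine ⟨(j:ℝ)/((h:ℝ)+1), by positivity, ?_, ?_⟩
    · rw [div_lt_one (by positivity)]
      have : (j:ℝ) ≤ h := by exact_mod_cast hjh
      linarith
    · set x := (j:ℝ)/((h:ℝ)+1) with hxdef
      have hxval : x * ((h:ℝ)+1) = j := div_mul_cancel₀ _ (by positivity)
      have hxα : p (r ⟨m - (h+1) + (j-1), by omega⟩) ≤ x * α := by
        rw [hxdef, div_mul_eq_mul_div, le_div_iff₀ (by positivity)]
        push_cast at hle ⊢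
        linarith
      have hsub : (Finset.univ.filter fun k : Fin m => x * α < p k) ⊆
          (Finset.univ.filter fun l : Fin m => m - (h+1) + j ≤ (l:ℕ)).image r := by
        intro k hk
        simp only [mem_filter, mem_univ, true_and, mem_image] at hk ⊢
        obtain ⟨l, rfl⟩ := hr.surjective k
        refine ⟨l, ?_, rfl⟩
        by_contra hcl
        push_neg at hcl
        have hml : p (r l) ≤ p (r ⟨m - (h+1) + (j-1), by omega⟩) :=
          hmono _ _ (by simp only [Fin.le_def]; omega)
        linarith
      have hcard : ((Finset.univ.filter fun l : Fin m => m - (h+1) + j ≤ (l:ℕ)).image r).card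
          = h + 1 - j := by
        rw [Finset.card_image_of_injective _ hr.injective, card_filter_ge]
        omega
      have hle2 := Finset.card_le_card hsub
      rw [hcard] at hle2
      have hle3 : ((Finset.univ.filter fun k : Fin m => x * α < p k).card : ℝ)
          ≤ ((h + 1 - j : ℕ) : ℝ) := by exact_mod_cast hle2
      have hcast : ((h + 1 - j : ℕ) : ℝ) = (h:ℝ) + 1 - j := by
        rw [Nat.cast_sub (by omega)]; push_cast; ring
      have hfin : ((h:ℝ) + 1) * (1 - x) = (h:ℝ) + 1 - j := by
        rw [mul_sub, mul_one, mul_comm ((h:ℝ)+1) x, hxval]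
      rw [hfin]
      linarith [hle3, hcast.le]
end

section
/- Let F be the set of weakly increasing functions from [0,1] to [0,1], equipped with the supremum norm, let α ∈ (0,1], and define φ(f) = inf_{0 ≤ x < 1} (1 − f(xα))/(1 − x) for f ∈ F. If f ∈ F satisfies f(α) < 1, then φ is continuous at f: for every ε > 0 there exists δ > 0 such that every g ∈ F with sup_{x ∈ [0,1]} |g(x) − f(x)| < δ satisfies |φ(g) − φ(f)| < ε. -/
/-- `φ(f) = inf_{0 ≤ x < 1} (1 − f(xα))/(1 − x)`. -/
noncomputable def phi (α : ℝ) (f : ℝ → ℝ) : ℝ :=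
  sInf ((fun x => (1 - f (x * α)) / (1 - x)) '' Set.Ico 0 1)

section Aux

variable {α : ℝ}

lemma aux_mem_S {f : ℝ → ℝ} {x : ℝ} (hx : x ∈ Set.Ico (0:ℝ) 1) :
    (1 - f (x * α)) / (1 - x) ∈
      ((fun x => (1 - f (x * α)) / (1 - x)) '' Set.Ico 0 1) :=
  ⟨x, hx, rfl⟩

lemma aux_mul_mem (hα : 0 < α ∧ α ≤ 1) {x : ℝ} (hx : x ∈ Set.Ico (0:ℝ) 1) :
    x * α ∈ Set.Icc (0:ℝ) 1 :=
  ⟨mul_nonneg hx.1 hα.1.le, by nlinarith [hx.1, hx.2, hα.1, hα.2]⟩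

lemma aux_nonneg (hα : 0 < α ∧ α ≤ 1) {f : ℝ → ℝ}
    (hf : Set.MapsTo f (Set.Icc 0 1) (Set.Icc 0 1)) :
    ∀ y ∈ ((fun x => (1 - f (x * α)) / (1 - x)) '' Set.Ico 0 1), (0:ℝ) ≤ y := by
  rintro y ⟨x, hx, rfl⟩
  have h1 := hf (aux_mul_mem hα hx)
  have h2 : (0:ℝ) < 1 - x := by linarith [hx.2]
  exact div_nonneg (by linarith [h1.2]) h2.le

lemma aux_bddBelow (hα : 0 < α ∧ α ≤ 1) {f : ℝ → ℝ}
    (hf : Set.MapsTo f (Set.Icc 0 1) (Set.Icc 0 1)) :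
    BddBelow ((fun x => (1 - f (x * α)) / (1 - x)) '' Set.Ico 0 1) :=
  ⟨0, fun y hy => aux_nonneg hα hf y hy⟩

lemma aux_phi_le_one (hα : 0 < α ∧ α ≤ 1) {f : ℝ → ℝ}
    (hf : Set.MapsTo f (Set.Icc 0 1) (Set.Icc 0 1)) :
    phi α f ≤ 1 := by
  have h0 : (0:ℝ) ∈ Set.Ico (0:ℝ) 1 := ⟨le_refl 0, one_pos⟩
  have h := csInf_le (aux_bddBelow hα hf) (aux_mem_S (f := f) h0)
  have hf0 := hf (Set.mem_Icc.mpr ⟨le_refl 0, zero_le_one⟩)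
  simp only [zero_mul, sub_zero, div_one] at h
  unfold phi
  calc sInf _ ≤ 1 - f 0 := h
    _ ≤ 1 := by linarith [hf0.1]

lemma aux_phi_bounds (hα : 0 < α ∧ α ≤ 1) {f g : ℝ → ℝ} {δ : ℝ}
    (hfmono : MonotoneOn f (Set.Icc 0 1))
    (hfmaps : Set.MapsTo f (Set.Icc 0 1) (Set.Icc 0 1))
    (hgmaps : Set.MapsTo g (Set.Icc 0 1) (Set.Icc 0 1))
    (hc : 0 < 1 - f α) (hδ0 : 0 < δ) (hδ : δ ≤ (1 - f α) / 2)
    (hpt : ∀ y ∈ Set.Icc (0:ℝ) 1, |g y - f y| ≤ δ) :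
    phi α f - 4 * δ / (1 - f α) ≤ phi α g ∧
      phi α g - 4 * δ / (1 - f α) ≤ phi α f := by
  set c : ℝ := 1 - f α with hcdef
  have hαm : α ∈ Set.Icc (0:ℝ) 1 := ⟨hα.1.le, hα.2⟩
  have hne : ((fun x => (1 - g (x * α)) / (1 - x)) '' Set.Ico 0 1).Nonempty :=
    ⟨_, aux_mem_S (f := g) ⟨le_refl 0, one_pos⟩⟩
  have hnef : ((fun x => (1 - f (x * α)) / (1 - x)) '' Set.Ico 0 1).Nonempty :=
    ⟨_, aux_mem_S (f := f) ⟨le_refl 0, one_pos⟩⟩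
  have hMpos : 0 < 4 * δ / c := by positivity
  have hphif1 : phi α f ≤ 1 := aux_phi_le_one hα hfmaps
  have hphig1 : phi α g ≤ 1 := aux_phi_le_one hα hgmaps
  constructor
  · -- phi f - M ≤ phi g
    apply le_csInf hne
    rintro y ⟨x, hx, rfl⟩
    have hxa := aux_mul_mem hα hx
    have hd := hpt (x * α) hxa
    have hu : (0:ℝ) < 1 - x := by linarith [hx.2]
    rw [abs_le] at hd
    rcases le_or_gt x (1 - c / 4) with hcase | hcase
    · have hu4 : c / 4 ≤ 1 - x := by linarith
      have hfx : phi α f ≤ (1 - f (x * α)) / (1 - x) :=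
        csInf_le (aux_bddBelow hα hfmaps) (aux_mem_S (f := f) hx)
      have key : (g (x * α) - f (x * α)) / (1 - x) ≤ 4 * δ / c := by
        rw [div_le_div_iff₀ hu hc]
        nlinarith [hd.2, hδ0.le]
      have hid : (1 - f (x * α)) / (1 - x) - (1 - g (x * α)) / (1 - x)
          = (g (x * α) - f (x * α)) / (1 - x) := by
        field_simp
        ring
      linarith
    · -- x close to 1 : the value is large
      have hfa : f (x * α) ≤ f α := by
        apply hfmono hxa hαm
        nlinarith [hx.1, hx.2, hα.1]
      have hb : c / 2 ≤ 1 - g (x * α) := by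
        have := hd.2
        simp only [hcdef] at *
        linarith
      have hbig : 2 ≤ (1 - g (x * α)) / (1 - x) := by
        rw [le_div_iff₀ hu]
        nlinarith
      linarith
  · -- phi g - M ≤ phi f
    apply le_csInf hnef
    rintro y ⟨x, hx, rfl⟩
    have hxa := aux_mul_mem hα hx
    have hd := hpt (x * α) hxa
    have hu : (0:ℝ) < 1 - x := by linarith [hx.2]
    rw [abs_le] at hd
    rcases le_or_gt x (1 - c / 4) with hcase | hcase
    · have hu4 : c / 4 ≤ 1 - x := by linarith
      have hgx : phi α g ≤ (1 - g (x * α)) / (1 - x) :=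
        csInf_le (aux_bddBelow hα hgmaps) (aux_mem_S (f := g) hx)
      have key : (f (x * α) - g (x * α)) / (1 - x) ≤ 4 * δ / c := by
        rw [div_le_div_iff₀ hu hc]
        nlinarith [hd.1, hδ0.le]
      have hid : (1 - g (x * α)) / (1 - x) - (1 - f (x * α)) / (1 - x)
          = (f (x * α) - g (x * α)) / (1 - x) := by
        field_simp
        ring
      linarith
    · have hfa : f (x * α) ≤ f α := by
        apply hfmono hxa hαm
        nlinarith [hx.1, hx.2, hα.1]
      have hb : c ≤ 1 - f (x * α) := by
        simp only [hcdef] at *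
        linarith
      have hbig : 2 ≤ (1 - f (x * α)) / (1 - x) := by
        rw [le_div_iff₀ hu]
        nlinarith
      linarith

end Aux

theorem stmt16 (α : ℝ) (hα : 0 < α ∧ α ≤ 1)
    (f : ℝ → ℝ) (hfmono : MonotoneOn f (Set.Icc 0 1))
    (hfmaps : Set.MapsTo f (Set.Icc 0 1) (Set.Icc 0 1))
    (hfα : f α < 1) :
    ∀ ε : ℝ, 0 < ε → ∃ δ : ℝ, 0 < δ ∧
      ∀ g : ℝ → ℝ, MonotoneOn g (Set.Icc 0 1) →
        Set.MapsTo g (Set.Icc 0 1) (Set.Icc 0 1) →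
        sSup ((fun x => |g x - f x|) '' Set.Icc 0 1) < δ →
        |phi α g - phi α f| < ε := by
  intro ε hε
  set c : ℝ := 1 - f α with hcdef
  have hc : 0 < c := by simp [hcdef]; linarith
  refine ⟨min (c / 2) (ε * c / 8), by positivity, ?_⟩
  intro g hgmono hgmaps hsup
  set δ : ℝ := min (c / 2) (ε * c / 8) with hδdef
  have hδ0 : 0 < δ := by positivity
  -- pointwise bound
  have hpt : ∀ y ∈ Set.Icc (0:ℝ) 1, |g y - f y| ≤ δ := by
    intro y hy
    have hbdd : BddAbove ((fun x => |g x - f x|) '' Set.Icc 0 1) := by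
      refine ⟨2, ?_⟩
      rintro z ⟨w, hw, rfl⟩
      have h1 := hfmaps hw
      have h2 := hgmaps hw
      rw [abs_le]
      constructor <;> [linarith [h1.2, h2.1]; linarith [h1.1, h2.2]]
    have hle : |g y - f y| ≤ sSup ((fun x => |g x - f x|) '' Set.Icc 0 1) :=
      le_csSup hbdd ⟨y, hy, rfl⟩
    linarith
  have hδle : δ ≤ c / 2 := min_le_left _ _
  have hδle2 : δ ≤ ε * c / 8 := min_le_right _ _
  have hb := aux_phi_bounds hα hfmono hfmaps hgmaps hc hδ0 hδle hpt
  have hM : 4 * δ / c ≤ ε / 2 := by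
    rw [div_le_iff₀ hc]
    nlinarith
  rw [abs_sub_lt_iff]
  constructor <;> [linarith [hb.2]; linarith [hb.1]]
end

section
/- Let q ∈ [0,1] and suppose P is Simes-detectable at qα, i.e., π̄_{qα} < 1. Then there exists a sequence (J_m)_{m≥1}, where each J_m is a random subset of {1,…,m} measurable with respect to p_1,…,p_m, and a constant y > 0, such that almost surely q_{α,m}(J_m) ≤ π̄_α·q for every m, and ℙ(|J_m|/m ≥ y) → 1 as m → ∞. -/
open Finset

attribute [local instance] Classical.propDecidable

/-- `π̄_α = inf_{0 ≤ x < 1} (1 − P(xα))/(1 − x)` if `P(α) < 1`, and `π̄_α = 0` otherwise. -/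
noncomputable def piBar (P : ℝ → ℝ) (α : ℝ) : ℝ :=
  if P α < 1 then sInf ((fun x => (1 - P (x * α)) / (1 - x)) '' Set.Ico 0 1) else 0

open MeasureTheory ProbabilityTheory Filter

lemma pOrd_le_of_count {m : ℕ} (v : Fin m → ℝ) (K : Finset (Fin m)) {t : ℝ} {i : ℕ}
    (hi : 1 ≤ i) (hcount : i ≤ (K.filter fun j => v j ≤ t).card) : pOrd v K i ≤ t := by
  classical
  set l : List ℝ := (K.val.map v).sort (· ≤ ·) with hl
  have hsort : l.Pairwise (· ≤ ·) := Multiset.pairwise_sort (s := K.val.map v) (r := (· ≤ ·))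
  have hlen : l.length = K.card := by simp [hl]
  have hcountP : i ≤ l.countP (fun x => decide (x ≤ t)) := by
    have h1 : (K.filter fun j => v j ≤ t).card
        = Multiset.countP (fun x => x ≤ t) (K.val.map v) := by
      rw [Multiset.countP_map]; rfl
    have h2 : Multiset.countP (fun x => x ≤ t) (K.val.map v)
        = l.countP (fun x => decide (x ≤ t)) := by
      rw [← Multiset.sort_eq (s := K.val.map v) (r := (· ≤ ·)), Multiset.coe_countP]
    omega
  have hfilt := hcount.trans (Finset.card_filter_le _ _)
  have hilen : i - 1 < l.length := by omega
  have hpo : pOrd v K i = l[i-1] := List.getD_eq_getElem l 0 hilen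
  rw [hpo]
  by_contra hcon
  push_neg at hcon
  have hdropzero : l.countP (fun x => decide (x ≤ t)) =
      (l.take (i-1)).countP (fun x => decide (x ≤ t))
      + (l.drop (i-1)).countP (fun x => decide (x ≤ t)) := by
    rw [← List.countP_append, List.take_append_drop]
  have htake : (l.take (i-1)).countP (fun x => decide (x ≤ t)) ≤ i - 1 := by
    calc (l.take (i-1)).countP (fun x => decide (x ≤ t)) ≤ (l.take (i-1)).length :=
          List.countP_le_length
      _ ≤ i - 1 := by rw [List.length_take]; omega
  have hdrop : (l.drop (i-1)).countP (fun x => decide (x ≤ t)) = 0 := by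
    rw [List.countP_eq_zero]
    intro x hx
    obtain ⟨k, hk, rfl⟩ := List.getElem_of_mem hx
    have hk' : i - 1 + k < l.length := by rw [List.length_drop] at hk; omega
    rw [List.getElem_drop]
    have hle : l[i-1] ≤ l[i-1+k]'hk' := by
      have : (⟨i-1, hilen⟩ : Fin l.length) ≤ ⟨i-1+k, hk'⟩ := by simp
      simpa using hsort.rel_get_of_le this
    simp only [decide_eq_true_eq]
    push_neg
    exact lt_of_lt_of_le hcon hle
  omega

lemma not_closedX_empty {m : ℕ} (α : ℝ) (v : Fin m → ℝ) : ¬ ClosedX α v (∅ : Finset (Fin m)) := by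
  intro h
  obtain ⟨i, h1, h2, _⟩ := h ∅ (Finset.Subset.refl _)
  simp at h2
  omega

lemma tval_mem {m : ℕ} (α : ℝ) (v : Fin m → ℝ) (S : Finset (Fin m)) :
    ∃ I, I ⊆ S ∧ ¬ ClosedX α v I ∧ I.card = tval α v S := by
  have hne : {k | ∃ I, I ⊆ S ∧ ¬ ClosedX α v I ∧ I.card = k}.Nonempty :=
    ⟨0, ∅, Finset.empty_subset _, not_closedX_empty α v, Finset.card_empty⟩
  have hbdd : BddAbove {k | ∃ I, I ⊆ S ∧ ¬ ClosedX α v I ∧ I.card = k} := by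
    refine ⟨m, fun k hk => ?_⟩
    obtain ⟨I, _, _, hcard⟩ := hk
    simpa [← hcard] using (Finset.card_le_univ I).trans_eq (by simp)
  exact Nat.sSup_mem hne hbdd

/-- Key deterministic bound: `tval(S) * (1 - x₁) ≤ c * (m - N₁)` for
`S = {i : v i ≤ c α}` and `N₁ = #{i : v i ≤ x₁ α}`. -/
lemma tval_bound {m : ℕ} (v : Fin m → ℝ) {α c x₁ : ℝ} (hα : 0 < α) (hc : 0 ≤ c)
    (hx₀ : 0 ≤ x₁) (hx₁ : x₁ ≤ 1) :
    (tval α v (univ.filter fun i => v i ≤ c * α) : ℝ) * (1 - x₁)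
      ≤ c * ((m : ℝ) - (univ.filter fun i : Fin m => v i ≤ x₁ * α).card) := by
  classical
  set S := univ.filter fun i : Fin m => v i ≤ c * α with hS
  set Tfs := univ.filter fun i : Fin m => v i ≤ x₁ * α with hT
  set N₁ := Tfs.card with hN₁
  have hN₁m : N₁ ≤ m := by
    simpa using (Finset.card_le_univ Tfs).trans_eq (by simp)
  obtain ⟨I, hIS, hnX, hcard⟩ := tval_mem α v S
  rcases Nat.eq_zero_or_pos (tval α v S) with h0 | hpos
  · rw [h0]
    push_cast
    have : (N₁ : ℝ) ≤ m := by exact_mod_cast hN₁m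
    nlinarith
  · -- I is nonempty
    obtain ⟨K, hIK, hKU⟩ : ∃ K, I ⊆ K ∧ ¬ SimesU α v K := by
      by_contra hcon
      push_neg at hcon
      exact hnX fun J hJ => hcon J hJ
    have hknot : ∀ i, 1 ≤ i → i ≤ K.card → (i : ℝ) * α < (K.card : ℝ) * pOrd v K i := by
      intro i h1 h2
      by_contra hcon
      push_neg at hcon
      exact hKU ⟨i, h1, h2, hcon⟩
    set a := tval α v S with ha
    set k := K.card with hk
    have hak : a ≤ k := hcard ▸ Finset.card_le_card hIK
    have ha1 : 1 ≤ a := hpos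
    -- step 1 : a < k * c
    have hstep1 : (a : ℝ) < (k : ℝ) * c := by
      have hcount : a ≤ (K.filter fun j => v j ≤ c * α).card := by
        rw [← hcard]
        refine Finset.card_le_card fun j hj => ?_
        refine Finset.mem_filter.2 ⟨hIK hj, ?_⟩
        have := hIS hj
        rw [hS, Finset.mem_filter] at this
        exact this.2
      have hpo := pOrd_le_of_count v K ha1 hcount
      have h1 := hknot a ha1 hak
      have hkpos : (0:ℝ) ≤ (k : ℝ) := by positivity
      have : (a : ℝ) * α < (k : ℝ) * (c * α) :=
        lt_of_lt_of_le h1 (by nlinarith)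
      nlinarith
    -- step 2 : k * (1 - x₁) ≤ m - N₁
    have hstep2 : (k : ℝ) * (1 - x₁) ≤ (m : ℝ) - N₁ := by
      by_cases hkm : N₁ + k ≤ m
      · have h1 : (k : ℝ) ≤ (m : ℝ) - N₁ := by
          have : (N₁ : ℝ) + k ≤ m := by exact_mod_cast hkm
          linarith
        nlinarith
      · push_neg at hkm
        set i₀ := N₁ + k - m with hi₀
        have hi₀1 : 1 ≤ i₀ := by omega
        have hi₀k : i₀ ≤ k := by omega
        have hinter : i₀ ≤ (K.filter fun j => v j ≤ x₁ * α).card := by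
          have hfe : K.filter (fun j => v j ≤ x₁ * α) = Tfs ∩ K := by
            ext j
            simp [hT, Finset.mem_filter, Finset.mem_inter, and_comm]
          rw [hfe]
          have h1 := Finset.card_inter_add_card_union Tfs K
          have h2 : (Tfs ∪ K).card ≤ m := by
            simpa using (Finset.card_le_univ (Tfs ∪ K)).trans_eq (by simp)
          omega
        have hpo := pOrd_le_of_count v K hi₀1 hinter
        have h1 := hknot i₀ hi₀1 hi₀k
        have hcast : (i₀ : ℝ) = (N₁ : ℝ) + k - m := by
          rw [hi₀]
          push_cast [Nat.cast_sub (le_of_lt hkm)]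
          ring
        have hkpos : (0:ℝ) ≤ (k : ℝ) := by positivity
        have h2 : (i₀ : ℝ) * α < (k : ℝ) * (x₁ * α) :=
          lt_of_lt_of_le h1 (by nlinarith)
        have h3 : (i₀ : ℝ) < (k : ℝ) * x₁ := by nlinarith
        rw [hcast] at h3
        linarith
    have hkc : (0:ℝ) ≤ (k:ℝ) * c := by positivity
    nlinarith [mul_le_mul_of_nonneg_right hstep1.le (by linarith : (0:ℝ) ≤ 1 - x₁),
      mul_le_mul_of_nonneg_left hstep2 hc]

lemma tval_eq_zero_of_all_le {m : ℕ} {v : Fin m → ℝ} {α : ℝ}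
    (hall : ∀ i, v i ≤ α) (S : Finset (Fin m)) : tval α v S = 0 := by
  obtain ⟨I, _, hnX, hcard⟩ := tval_mem α v S
  rcases Nat.eq_zero_or_pos (tval α v S) with h0 | hpos
  · exact h0
  · exfalso
    apply hnX
    intro K hIK
    have hKcard : 1 ≤ K.card := le_trans (by omega : 1 ≤ I.card) (Finset.card_le_card hIK)
    refine ⟨K.card, hKcard, le_refl _, ?_⟩
    have hcount : K.card ≤ (K.filter fun j => v j ≤ α).card := by
      rw [Finset.filter_true_of_mem fun j _ => hall j]
    have hpo := pOrd_le_of_count v K hKcard hcount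
    have : (0:ℝ) ≤ (K.card : ℝ) := by positivity
    nlinarith

lemma measurableSet_filter_eq {m : ℕ} (t : ℝ) (b : Finset (Fin m)) :
    MeasurableSet {v : Fin m → ℝ | univ.filter (fun i => v i ≤ t) = b} := by
  classical
  have heq : {v : Fin m → ℝ | univ.filter (fun i => v i ≤ t) = b}
      = ⋂ i : Fin m, (if i ∈ b then {v : Fin m → ℝ | v i ≤ t} else {v : Fin m → ℝ | v i ≤ t}ᶜ) := by
    ext v
    simp only [Set.mem_setOf_eq, Set.mem_iInter]
    constructor
    · intro h i
      by_cases hib : i ∈ b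
      · rw [if_pos hib]
        rw [← h, Finset.mem_filter] at hib
        exact hib.2
      · rw [if_neg hib]
        intro hvi
        exact hib (h ▸ Finset.mem_filter.2 ⟨Finset.mem_univ i, hvi⟩)
    · intro h
      ext i
      rw [Finset.mem_filter]
      constructor
      · rintro ⟨-, hvi⟩
        by_contra hib
        have := h i
        rw [if_neg hib] at this
        exact this hvi
      · intro hib
        have := h i
        rw [if_pos hib] at this
        exact ⟨Finset.mem_univ i, this⟩
  rw [heq]
  refine MeasurableSet.iInter fun i => ?_
  have hbase : MeasurableSet {v : Fin m → ℝ | v i ≤ t} :=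
    measurableSet_le (measurable_pi_apply i) measurable_const
  split_ifs
  · exact hbase
  · exact hbase.compl

/-- Any function of the two threshold-filters is measurable into the discrete σ-algebra. -/
lemma measurable_of_filter_factor {m : ℕ} {β : Type*} (t₁ t₂ : ℝ)
    (G : Finset (Fin m) → Finset (Fin m) → β) :
    ∀ s : Set β, MeasurableSet {v : Fin m → ℝ |
      G (univ.filter fun i => v i ≤ t₁) (univ.filter fun i => v i ≤ t₂) ∈ s} := by
  intro s
  have heq : {v : Fin m → ℝ |
        G (univ.filter fun i => v i ≤ t₁) (univ.filter fun i => v i ≤ t₂) ∈ s}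
      = ⋃ (bp : Finset (Fin m) × Finset (Fin m)) (_ : G bp.1 bp.2 ∈ s),
          ({v : Fin m → ℝ | univ.filter (fun i => v i ≤ t₁) = bp.1}
            ∩ {v : Fin m → ℝ | univ.filter (fun i => v i ≤ t₂) = bp.2}) := by
    ext v
    simp only [Set.mem_setOf_eq, Set.mem_iUnion, Set.mem_inter_iff]
    constructor
    · intro h
      exact ⟨(univ.filter fun i => v i ≤ t₁, univ.filter fun i => v i ≤ t₂), h, rfl, rfl⟩
    · rintro ⟨bp, h, h1, h2⟩
      rw [h1, h2]
      exact h
  rw [heq]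
  exact MeasurableSet.iUnion fun bp => MeasurableSet.iUnion fun _ =>
    (measurableSet_filter_eq t₁ bp.1).inter (measurableSet_filter_eq t₂ bp.2)

open MeasureTheory ProbabilityTheory Filter

lemma lln_filter {Ω : Type*} [MeasureSpace Ω] [IsProbabilityMeasure (ℙ : Measure Ω)]
    (p : ℕ → Ω → ℝ) (hpmeas : ∀ i, Measurable (p i))
    (hprange : ∀ i ω, p i ω ∈ Set.Icc (0:ℝ) 1)
    (hindep : iIndepFun p ℙ)
    (μfun : ℝ → ℝ)
    (hcdf : ∀ i, ∀ x ∈ Set.Icc (0:ℝ) 1, ℙ {ω | p i ω ≤ x} = ENNReal.ofReal (μfun x))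
    (t : ℝ) (ht0 : 0 ≤ t) (ht1 : t ≤ 1) (hμ0 : 0 ≤ μfun t) :
    ∀ᵐ ω ∂ℙ, Tendsto (fun m : ℕ =>
        ((univ.filter fun i : Fin m => p i.val ω ≤ t).card : ℝ) / m) atTop (nhds (μfun t)) := by
  classical
  have hident : ∀ i, IdentDistrib (p i) (p 0) ℙ ℙ := by
    intro i
    refine ⟨(hpmeas i).aemeasurable, (hpmeas 0).aemeasurable, ?_⟩
    haveI : IsProbabilityMeasure (Measure.map (p i) ℙ) :=
      Measure.isProbabilityMeasure_map (hpmeas i).aemeasurable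
    haveI : IsProbabilityMeasure (Measure.map (p 0) ℙ) :=
      Measure.isProbabilityMeasure_map (hpmeas 0).aemeasurable
    refine Measure.ext_of_Iic _ _ fun a => ?_
    rw [Measure.map_apply (hpmeas i) measurableSet_Iic,
      Measure.map_apply (hpmeas 0) measurableSet_Iic]
    have hset : ∀ j : ℕ, p j ⁻¹' Set.Iic a = {ω | p j ω ≤ a} := fun j => rfl
    rw [hset, hset]
    rcases le_or_gt 0 a with ha0 | ha0
    · rcases le_or_gt a 1 with ha1 | ha1
      · rw [hcdf i a ⟨ha0, ha1⟩, hcdf 0 a ⟨ha0, ha1⟩]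
      · have huniv : ∀ j : ℕ, {ω | p j ω ≤ a} = Set.univ := by
          intro j
          ext ω
          simp only [Set.mem_setOf_eq, Set.mem_univ, iff_true]
          exact le_trans (hprange j ω).2 ha1.le
        rw [huniv, huniv]
    · have hempty : ∀ j : ℕ, {ω | p j ω ≤ a} = (∅ : Set Ω) := by
        intro j
        ext ω
        simp only [Set.mem_setOf_eq, Set.mem_empty_iff_false, iff_false, not_le]
        exact lt_of_lt_of_le ha0 (hprange j ω).1
      rw [hempty, hempty]
  set f : ℝ → ℝ := (Set.Iic t).indicator (fun _ => 1) with hf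
  have hfmeas : Measurable f := measurable_const.indicator measurableSet_Iic
  set X : ℕ → Ω → ℝ := fun i => f ∘ p i with hX
  have hXind : ∀ i, X i = Set.indicator (p i ⁻¹' Set.Iic t) (fun _ => (1:ℝ)) := by
    intro i
    funext ω
    simp [hX, hf, Set.indicator_apply, Set.mem_preimage]
  have hint : Integrable (X 0) ℙ := by
    rw [hXind 0]
    exact (integrable_const (1:ℝ)).indicator ((hpmeas 0) measurableSet_Iic)
  have hindep' : Pairwise (fun i j => IndepFun (X i) (X j) ℙ) :=
    fun i j hij => (hindep.indepFun hij).comp hfmeas hfmeas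
  have hident' : ∀ i, IdentDistrib (X i) (X 0) ℙ ℙ := fun i => (hident i).comp hfmeas
  have hexp : ℙ[X 0] = μfun t := by
    rw [hXind 0, integral_indicator_const (1:ℝ) ((hpmeas 0) measurableSet_Iic)]
    have : (p 0 ⁻¹' Set.Iic t) = {ω | p 0 ω ≤ t} := rfl
    rw [this, measureReal_def, hcdf 0 t ⟨ht0, ht1⟩, smul_eq_mul, mul_one, ENNReal.toReal_ofReal hμ0]
  have hslln := strong_law_ae X hint hindep' hident'
  rw [hexp] at hslln
  filter_upwards [hslln] with ω hω
  refine hω.congr fun n => ?_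
  have h1 : ∑ i ∈ Finset.range n, X i ω
      = ((univ.filter fun i : Fin n => p i.val ω ≤ t).card : ℝ) := by
    have h2 : ∀ i : ℕ, X i ω = if p i ω ≤ t then (1:ℝ) else 0 := by
      intro i
      simp [hX, hf, Set.indicator_apply]
    calc ∑ i ∈ Finset.range n, X i ω
        = ∑ i ∈ Finset.range n, (if p i ω ≤ t then (1:ℝ) else 0) := by
          exact Finset.sum_congr rfl fun i _ => h2 i
      _ = ∑ i : Fin n, (if p i.val ω ≤ t then (1:ℝ) else 0) :=
          (Fin.sum_univ_eq_sum_range (fun i => if p i ω ≤ t then (1:ℝ) else 0) n).symm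
      _ = ((univ.filter fun i : Fin n => p i.val ω ≤ t).card : ℝ) := by
          rw [Finset.sum_boole]
  rw [h1, smul_eq_mul, inv_mul_eq_div]

set_option maxHeartbeats 2000000 in
theorem stmt18 {Ω : Type*} [MeasureSpace Ω] [IsProbabilityMeasure (ℙ : Measure Ω)]
    (p : ℕ → Ω → ℝ) (hpmeas : ∀ i, Measurable (p i))
    (hprange : ∀ i ω, p i ω ∈ Set.Icc (0 : ℝ) 1)
    (hindep : iIndepFun p ℙ)
    (γ : ℝ) (hγ : 0 ≤ γ ∧ γ ≤ 1)
    (P1 : ℝ → ℝ) (hP1mono : MonotoneOn P1 (Set.Icc 0 1))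
    (hP1bounds : ∀ x ∈ Set.Icc (0 : ℝ) 1, x ≤ P1 x ∧ P1 x ≤ 1) (hP1one : P1 1 = 1)
    (hcdf : ∀ i, ∀ x ∈ Set.Icc (0 : ℝ) 1,
      ℙ {ω | p i ω ≤ x} = ENNReal.ofReal (γ * x + (1 - γ) * P1 x))
    (α : ℝ) (hα : 0 < α ∧ α ≤ 1)
    (q : ℝ) (hq : 0 ≤ q ∧ q ≤ 1)
    (hdetect : piBar (fun x => γ * x + (1 - γ) * P1 x) (q * α) < 1) :
    ∃ (J : (m : ℕ) → Ω → Finset (Fin m)) (y : ℝ), 0 < y ∧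
      (∀ m : ℕ, @Measurable Ω (Finset (Fin m))
        (MeasurableSpace.comap (fun ω => fun i : Fin m => p i.val ω) inferInstance) ⊤
        (J m)) ∧
      (∀ᵐ ω ∂ℙ, ∀ m : ℕ,
        qval α (fun i : Fin m => p i.val ω) (J m ω) ≤
          piBar (fun x => γ * x + (1 - γ) * P1 x) α * q) ∧
      Tendsto (fun m : ℕ => ℙ {ω | y ≤ ((J m ω).card : ℝ) / m}) atTop (nhds 1) := by
  classical
  obtain ⟨hα0, hα1⟩ := hα
  obtain ⟨hq0, hq1⟩ := hq
  obtain ⟨hγ0, hγ1⟩ := hγ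
  set Pf : ℝ → ℝ := fun x => γ * x + (1 - γ) * P1 x with hPf
  -- basic facts about Pf
  have hPmono : ∀ a b : ℝ, 0 ≤ a → a ≤ b → b ≤ 1 → Pf a ≤ Pf b := by
    intro a b h0 hab hb1
    have h1 : P1 a ≤ P1 b := hP1mono ⟨h0, hab.trans hb1⟩ ⟨h0.trans hab, hb1⟩ hab
    simp only [hPf]
    nlinarith
  have hPge : ∀ x : ℝ, 0 ≤ x → x ≤ 1 → x ≤ Pf x := by
    intro x h0 h1
    have := (hP1bounds x ⟨h0, h1⟩).1
    simp only [hPf]; nlinarith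
  have hPle1 : ∀ x : ℝ, 0 ≤ x → x ≤ 1 → Pf x ≤ 1 := by
    intro x h0 h1
    have := (hP1bounds x ⟨h0, h1⟩).2
    simp only [hPf]; nlinarith
  clear_value Pf
  by_cases hPA : Pf α < 1
  case neg =>
    -- Case A : P(α) ≥ 1, hence a.s. all p-values are ≤ α and everything is rejected.
    push_neg at hPA
    refine ⟨fun m _ => (univ : Finset (Fin m)), 1, one_pos, fun m => measurable_const, ?_, ?_⟩
    · -- a.e. bound
      have hae : ∀ᵐ ω ∂ℙ, ∀ i : ℕ, p i ω ≤ α := by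
        rw [ae_all_iff]
        intro i
        have hms : MeasurableSet {ω | p i ω ≤ α} := measurableSet_le (hpmeas i) measurable_const
        have hPA2 : (1:ℝ) ≤ γ * α + (1 - γ) * P1 α := by
          have h := hPA; simp only [hPf] at h; exact h
        have h1 : ℙ {ω | p i ω ≤ α} = 1 := by
          refine le_antisymm prob_le_one ?_
          rw [hcdf i α ⟨hα0.le, hα1⟩, show (1 : ENNReal) = ENNReal.ofReal 1 by simp]
          exact ENNReal.ofReal_le_ofReal hPA2
        have : ℙ {ω | p i ω ≤ α}ᶜ = 0 := by
          rw [prob_compl_eq_zero_iff hms, h1]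
        exact this
      filter_upwards [hae] with ω hω m
      have htv : tval α (fun i : Fin m => p i.val ω) univ = 0 :=
        tval_eq_zero_of_all_le (fun i => hω i.val) _
      have hqv : qval α (fun i : Fin m => p i.val ω) univ = 0 := by
        rw [qval]
        split_ifs with h
        · rfl
        · rw [htv]; simp
      rw [hqv, piBar, if_neg (not_lt.2 hPA)]
      simp
    · -- probability
      have hev : ∀ᶠ m : ℕ in atTop,
          ℙ {ω : Ω | (1:ℝ) ≤ ((univ : Finset (Fin m)).card : ℝ) / m} = 1 := by
        filter_upwards [eventually_ge_atTop 1] with m hm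
        have : {ω : Ω | (1:ℝ) ≤ ((univ : Finset (Fin m)).card : ℝ) / m} = Set.univ := by
          ext ω
          simp only [Set.mem_setOf_eq, Set.mem_univ, iff_true, Finset.card_univ, Fintype.card_fin]
          rw [div_self (by positivity : (m:ℝ) ≠ 0)]
        rw [this, measure_univ]
      exact Tendsto.congr' (hev.mono fun m hm => hm.symm) tendsto_const_nhds
  case pos =>
    -- Case B : P(α) < 1
    set f : ℝ → ℝ := fun x => (1 - Pf (x * α)) / (1 - x) with hfdef
    set πb : ℝ := sInf (f '' Set.Ico 0 1) with hπdef
    clear_value f πb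
    have hπeq : piBar Pf α = πb := by rw [piBar, if_pos hPA, hπdef, hfdef]
    have hne : (f '' Set.Ico 0 1).Nonempty :=
      ⟨f 0, Set.mem_image_of_mem f ⟨le_refl 0, one_pos⟩⟩
    have hfnonneg : ∀ x ∈ Set.Ico (0:ℝ) 1, 0 ≤ f x := by
      rintro x ⟨hx0, hx1⟩
      have hxα0 : 0 ≤ x * α := by positivity
      have hxα1 : x * α ≤ 1 := by nlinarith
      have := hPle1 (x*α) hxα0 hxα1
      have h1x : 0 < 1 - x := by linarith
      simp only [hfdef]
      exact div_nonneg (by linarith) (by linarith)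
    have hbdd : BddBelow (f '' Set.Ico 0 1) := by
      refine ⟨0, ?_⟩
      rintro b ⟨x, hx, rfl⟩
      exact hfnonneg x hx
    have hπub : ∀ x ∈ Set.Ico (0:ℝ) 1, πb ≤ f x := fun x hx => by
      rw [hπdef]; exact csInf_le hbdd (Set.mem_image_of_mem f hx)
    have hπlb : 1 - Pf α ≤ πb := by
      rw [hπdef]
      refine le_csInf hne ?_
      rintro b ⟨x, ⟨hx0, hx1⟩, rfl⟩
      have h1x : 0 < 1 - x := by linarith
      have hxα0 : 0 ≤ x * α := by positivity
      have hxαα : x * α ≤ α := by nlinarith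
      have hPx : Pf (x*α) ≤ Pf α := hPmono _ _ hxα0 hxαα hα1
      rw [hfdef, le_div_iff₀ h1x]
      nlinarith
    have hπpos : 0 < πb := lt_of_lt_of_le (by linarith) hπlb
    -- extract x₀ from detectability
    have hqα0 : 0 ≤ q * α := by positivity
    have hqαα : q * α ≤ α := by nlinarith
    have hdq : Pf (q * α) < 1 := lt_of_le_of_lt (hPmono _ _ hqα0 hqαα hα1) hPA
    rw [piBar, if_pos hdq] at hdetect
    have hx₀ex : ∃ x ∈ Set.Ico (0:ℝ) 1, (1 - Pf (x * (q * α))) / (1 - x) < 1 := by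
      by_contra hcon
      push_neg at hcon
      have h1le : (1:ℝ) ≤ sInf ((fun x => (1 - Pf (x * (q * α))) / (1 - x)) '' Set.Ico 0 1) := by
        refine le_csInf ⟨(fun x => (1 - Pf (x * (q * α))) / (1 - x)) 0,
          Set.mem_image_of_mem _ (⟨le_refl 0, one_pos⟩ : (0:ℝ) ∈ Set.Ico (0:ℝ) 1)⟩ ?_
        rintro b ⟨x, hx, rfl⟩
        exact hcon x hx
      exact absurd h1le (not_le.2 hdetect)
    obtain ⟨x₀, ⟨hx₀0, hx₀1⟩, hx₀f⟩ := hx₀ex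
    have hx₀P : x₀ < Pf (x₀ * (q * α)) := by
      have h1x : 0 < 1 - x₀ := by linarith
      rw [div_lt_one h1x] at hx₀f
      linarith
    set c : ℝ := x₀ * q with hcdef
    clear_value c
    have hcα : c * α = x₀ * (q * α) := by rw [hcdef]; ring
    have hc0 : 0 ≤ c := by rw [hcdef]; positivity
    have hc1 : c ≤ 1 := by rw [hcdef]; nlinarith
    have hμ₂x₀ : x₀ < Pf (c * α) := by rw [hcα]; exact hx₀P
    obtain ⟨θ₂, hθ₂pos, hθ₂lt, hx₀θ₂⟩ :
        ∃ θ₂ : ℝ, 0 < θ₂ ∧ θ₂ < Pf (c * α) ∧ x₀ < θ₂ :=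
      ⟨(x₀ + Pf (c * α)) / 2, by linarith, by linarith, by linarith⟩
    -- choose x₁ and θ₁
    have hmain : ∃ x₁ θ₁ : ℝ, 0 ≤ x₁ ∧ x₁ < 1 ∧ θ₁ < Pf (x₁ * α) ∧
        c * (1 - θ₁) ≤ πb * q * θ₂ * (1 - x₁) := by
      by_cases hcz : c = 0
      · refine ⟨0, -1, le_refl 0, one_pos, ?_, ?_⟩
        · have h0 := hPge 0 le_rfl zero_le_one
          rw [zero_mul]
          linarith
        · rw [hcz]
          have : 0 ≤ πb * q * θ₂ * (1 - 0) := by positivity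
          linarith
      · have hcpos : 0 < c := lt_of_le_of_ne hc0 (Ne.symm hcz)
        have hqpos : 0 < q := by
          rcases hq0.lt_or_eq with h | h
          · exact h
          · exfalso; apply hcz; rw [hcdef, ← h, mul_zero]
        obtain ⟨ρ, hρdef⟩ : ∃ ρ : ℝ, ρ = q * θ₂ / c := ⟨_, rfl⟩
        have hρ : 1 < ρ := by
          rw [hρdef, lt_div_iff₀ hcpos, one_mul, hcdef]
          nlinarith
        have hx₁ex : ∃ x ∈ Set.Ico (0:ℝ) 1, f x < πb * ρ := by
          by_contra hcon
          push_neg at hcon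
          have hle2 : πb * ρ ≤ πb := by
            rw [hπdef]
            refine le_csInf hne ?_
            rintro b ⟨x, hx, rfl⟩
            rw [← hπdef]
            exact hcon x hx
          nlinarith
        obtain ⟨x₁, ⟨hx₁0, hx₁1⟩, hfx₁⟩ := hx₁ex
        refine ⟨x₁, 1 - πb * ρ * (1 - x₁), hx₁0, hx₁1, ?_, ?_⟩
        · rw [hfdef] at hfx₁
          simp only at hfx₁
          rw [div_lt_iff₀ (by linarith : (0:ℝ) < 1 - x₁)] at hfx₁
          linarith
        · have hcρ : c * ρ = q * θ₂ := by
            rw [hρdef, mul_div_cancel₀ _ hcz]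
          have heq2 : c * (1 - (1 - πb * ρ * (1 - x₁))) = πb * (c * ρ) * (1 - x₁) := by ring
          rw [heq2, hcρ]
          exact le_of_eq (by ring)
    obtain ⟨x₁, θ₁, hx₁0, hx₁1, hθ₁lt, hkey⟩ := hmain
    -- thresholds
    have ht₁0 : 0 ≤ x₁ * α := by positivity
    have ht₁1 : x₁ * α ≤ 1 := by nlinarith
    have ht₂0 : 0 ≤ c * α := by positivity
    have ht₂1 : c * α ≤ 1 := by nlinarith
    have hμ₁0 : 0 ≤ Pf (x₁ * α) := le_trans ht₁0 (hPge _ ht₁0 ht₁1)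
    have hμ₂0 : 0 ≤ Pf (c * α) := le_trans ht₂0 (hPge _ ht₂0 ht₂1)
    have hcdf' : ∀ i, ∀ x ∈ Set.Icc (0:ℝ) 1,
        ℙ {ω | p i ω ≤ x} = ENNReal.ofReal (Pf x) := by
      simp only [hPf]; exact hcdf
    have hlln₁ := lln_filter p hpmeas hprange hindep Pf hcdf' (x₁ * α) ht₁0 ht₁1 hμ₁0
    have hlln₂ := lln_filter p hpmeas hprange hindep Pf hcdf' (c * α) ht₂0 ht₂1 hμ₂0
    -- the sets J
    set J : (m : ℕ) → Ω → Finset (Fin m) := fun m ω =>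
      if (θ₁ * m ≤ ((univ.filter fun i : Fin m => p i.val ω ≤ x₁ * α).card : ℝ)) ∧
         (θ₂ * m ≤ ((univ.filter fun i : Fin m => p i.val ω ≤ c * α).card : ℝ))
      then univ.filter (fun i : Fin m => p i.val ω ≤ c * α) else ∅ with hJdef
    refine ⟨J, θ₂, hθ₂pos, ?_, ?_, ?_⟩
    · -- measurability
      intro m s _
      refine MeasurableSpace.measurableSet_comap.2 ⟨{v : Fin m → ℝ |
        (fun b₁ b₂ : Finset (Fin m) =>
          if (θ₁ * m ≤ (b₁.card : ℝ)) ∧ (θ₂ * m ≤ (b₂.card : ℝ)) then b₂ else ∅)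
          (univ.filter fun i => v i ≤ x₁ * α) (univ.filter fun i => v i ≤ c * α) ∈ s},
        measurable_of_filter_factor (x₁ * α) (c * α) (fun b₁ b₂ : Finset (Fin m) =>
          if (θ₁ * m ≤ (b₁.card : ℝ)) ∧ (θ₂ * m ≤ (b₂.card : ℝ)) then b₂ else ∅) s, rfl⟩
    · -- qval bound, in fact surely
      refine Eventually.of_forall fun ω m => ?_
      rw [hπeq]
      have hπq0 : 0 ≤ πb * q := mul_nonneg hπpos.le hq0
      by_cases hg : (θ₁ * m ≤ ((univ.filter fun i : Fin m => p i.val ω ≤ x₁ * α).card : ℝ)) ∧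
         (θ₂ * m ≤ ((univ.filter fun i : Fin m => p i.val ω ≤ c * α).card : ℝ))
      · have hJ : J m ω = univ.filter (fun i : Fin m => p i.val ω ≤ c * α) := by
          rw [hJdef]
          exact if_pos hg
        rw [hJ]
        by_cases hSe : univ.filter (fun i : Fin m => p i.val ω ≤ c * α) = (∅ : Finset (Fin m))
        · rw [qval, if_pos hSe]
          exact hπq0
        · rw [qval, if_neg hSe]
          set v : Fin m → ℝ := fun i => p i.val ω with hv
          set N₁ := ((univ.filter fun i : Fin m => v i ≤ x₁ * α).card) with hN₁def
          set N₂ := ((univ.filter fun i : Fin m => v i ≤ c * α).card) with hN₂def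
          have hN₂pos : 0 < N₂ := Finset.card_pos.2 (Finset.nonempty_iff_ne_empty.2 hSe)
          have hN₂posR : (0:ℝ) < (N₂ : ℝ) := by exact_mod_cast hN₂pos
          have hT := tval_bound v hα0 hc0 hx₁0 hx₁1.le
          set T := (tval α v (univ.filter fun i => v i ≤ c * α) : ℝ) with hTdef
          have hg₁ : θ₁ * m ≤ (N₁ : ℝ) := hg.1
          have hg₂ : θ₂ * m ≤ (N₂ : ℝ) := hg.2
          have h2 : c * ((m:ℝ) - N₁) ≤ c * ((1 - θ₁) * m) := by
            apply mul_le_mul_of_nonneg_left _ hc0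
            linarith
          have h3 : c * ((1 - θ₁) * m) ≤ πb * q * θ₂ * (1 - x₁) * m := by
            have hm0 : (0:ℝ) ≤ m := Nat.cast_nonneg m
            calc c * ((1 - θ₁) * m) = (c * (1 - θ₁)) * m := by ring
              _ ≤ (πb * q * θ₂ * (1 - x₁)) * m := mul_le_mul_of_nonneg_right hkey hm0
              _ = πb * q * θ₂ * (1 - x₁) * m := by ring
          have h4 : T ≤ πb * q * θ₂ * m := by
            have h5 : T * (1 - x₁) ≤ (πb * q * θ₂ * m) * (1 - x₁) := by
              calc T * (1 - x₁) ≤ c * ((m:ℝ) - N₁) := hT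
                _ ≤ πb * q * θ₂ * (1 - x₁) * m := le_trans h2 h3
                _ = (πb * q * θ₂ * m) * (1 - x₁) := by ring
            exact le_of_mul_le_mul_right h5 (by linarith)
          have h6 : πb * q * θ₂ * m ≤ πb * q * N₂ := by
            calc πb * q * θ₂ * m = (πb * q) * (θ₂ * m) := by ring
              _ ≤ (πb * q) * N₂ := mul_le_mul_of_nonneg_left hg₂ hπq0
              _ = πb * q * N₂ := by ring
          rw [div_le_iff₀ hN₂posR]
          calc T ≤ πb * q * θ₂ * m := h4
            _ ≤ πb * q * N₂ := h6
      · have hJ : J m ω = (∅ : Finset (Fin m)) := by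
          rw [hJdef]
          exact if_neg hg
        rw [hJ, qval, if_pos rfl]
        exact hπq0
    · -- probability tends to 1
      set A : ℕ → Set Ω := fun m => {ω |
        (θ₁ * m ≤ ((univ.filter fun i : Fin m => p i.val ω ≤ x₁ * α).card : ℝ)) ∧
        (θ₂ * m ≤ ((univ.filter fun i : Fin m => p i.val ω ≤ c * α).card : ℝ))} with hAdef
      set B : ℕ → Set Ω := fun M => {ω | ∀ m, M ≤ m → ω ∈ A m} with hBdef
      have hBmono : Monotone B := fun M M' h ω hω m hm => hω m (le_trans h hm)
      have hBA : ∀ m, B m ⊆ A m := fun m ω hω => hω m le_rfl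
      have hsub : ∀ m : ℕ, 1 ≤ m → A m ⊆ {ω | θ₂ ≤ ((J m ω).card : ℝ) / m} := by
        intro m hm ω hω
        have hmpos : (0:ℝ) < m := by exact_mod_cast hm
        have hJ : J m ω = univ.filter (fun i : Fin m => p i.val ω ≤ c * α) := by
          rw [hJdef]
          exact if_pos hω
        simp only [Set.mem_setOf_eq, hJ]
        rw [le_div_iff₀ hmpos]
        exact hω.2
      have hae : ∀ᵐ ω ∂ℙ, ∃ M, ω ∈ B M := by
        filter_upwards [hlln₁, hlln₂] with ω h₁ h₂
        have e₁ : ∀ᶠ m : ℕ in atTop, θ₁ <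
            ((univ.filter fun i : Fin m => p i.val ω ≤ x₁ * α).card : ℝ) / m :=
          h₁.eventually (eventually_gt_nhds hθ₁lt)
        have e₂ : ∀ᶠ m : ℕ in atTop, θ₂ <
            ((univ.filter fun i : Fin m => p i.val ω ≤ c * α).card : ℝ) / m :=
          h₂.eventually (eventually_gt_nhds hθ₂lt)
        obtain ⟨M, hM⟩ := eventually_atTop.1 ((e₁.and e₂).and (eventually_ge_atTop 1))
        refine ⟨M, fun m hm => ?_⟩
        obtain ⟨⟨ha, hb⟩, hc'⟩ := hM m hm
        have hmpos : (0:ℝ) < m := by exact_mod_cast hc'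
        constructor
        · exact le_of_lt ((lt_div_iff₀ hmpos).1 ha)
        · exact le_of_lt ((lt_div_iff₀ hmpos).1 hb)
      have h1 : ℙ (⋃ M, B M) = 1 := by
        refine le_antisymm prob_le_one ?_
        have hcompl : ℙ {ω | ¬ ∃ M, ω ∈ B M} = 0 := ae_iff.1 hae
        have hU : {ω : Ω | ∃ M, ω ∈ B M} = ⋃ M, B M := by
          ext ω; simp [Set.mem_iUnion]
        calc (1:ENNReal) = ℙ (Set.univ : Set Ω) := measure_univ.symm
          _ ≤ ℙ ({ω | ∃ M, ω ∈ B M} ∪ {ω | ¬ ∃ M, ω ∈ B M}) := by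
              refine measure_mono fun ω _ => ?_
              by_cases h : ∃ M, ω ∈ B M
              · exact Or.inl h
              · exact Or.inr h
          _ ≤ ℙ {ω | ∃ M, ω ∈ B M} + ℙ {ω | ¬ ∃ M, ω ∈ B M} := measure_union_le _ _
          _ = ℙ (⋃ M, B M) := by rw [hcompl, add_zero, hU]
      have hBtend : Tendsto (fun M => ℙ (B M)) atTop (nhds 1) := by
        have := tendsto_measure_iUnion_atTop (μ := ℙ) hBmono
        rwa [h1] at this
      refine tendsto_of_tendsto_of_tendsto_of_le_of_le' hBtend tendsto_const_nhds ?_ ?_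
      · filter_upwards [eventually_ge_atTop 1] with m hm
        exact measure_mono ((hBA m).trans (hsub m hm))
      · exact Eventually.of_forall fun m => prob_le_one
end
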